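/- arXiv:1004.0469 — 9 statements merged into one kernel-verified Lean document; each statement's English description precedes it below -/
import Mathlib

section
/- For every real r with 0 < r ≤ 1 and every real φ with 0 < φ < π, the series ∑_{k=1}^∞ (-1)^{k+1} r^k cos(kφ)/(k+2) is strictly less than the series ∑_{k=1}^∞ (-1)^{k+1} r^k/(k+2). -/
open Real Filter MeasureTheory Set

set_option maxHeartbeats 1000000

section helpers

lemma geom_icc_tendsto {K : Type*} [NormedField K] [CompleteSpace K] {z : K} (hz : ‖z‖ < 1) :
    Tendsto (fun N : ℕ => ∑ k ∈ Finset.Icc 1 N, z ^ k) atTop (nhds (z / (1 - z))) := by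
  have hz1 : z ≠ 1 := by intro h; rw [h] at hz; simp at hz
  have h1 : (1:K) - z ≠ 0 := sub_ne_zero.mpr (Ne.symm hz1)
  have h2 : Tendsto (fun N : ℕ => ∑ k ∈ Finset.range (N+1), z ^ k) atTop (nhds (1 - z)⁻¹) :=
    (hasSum_geometric_of_norm_lt_one hz).tendsto_sum_nat.comp (tendsto_add_atTop_nat 1)
  have h3 : ∀ N : ℕ, ∑ k ∈ Finset.Icc 1 N, z ^ k = (∑ k ∈ Finset.range (N+1), z ^ k) - 1 := by
    intro N
    have he : Finset.Icc 1 N = (Finset.range (N+1)).erase 0 := by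
      ext k; simp [Nat.lt_succ_iff, Nat.one_le_iff_ne_zero, and_comm]
    rw [he, Finset.sum_erase_eq_sub (by simp)]
    simp
  simp only [h3]
  have h4 := h2.sub (tendsto_const_nhds (x := (1:K)))
  convert h4 using 2
  field_simp
  ring

lemma geom_icc_norm_le {K : Type*} [NormedField K] {z : K} (hz : ‖z‖ ≤ 1) (hz1 : z ≠ 1) (N : ℕ) :
    ‖∑ k ∈ Finset.Icc 1 N, z ^ k‖ ≤ 2 / ‖1 - z‖ := by
  have hsub : z - 1 ≠ 0 := sub_ne_zero.mpr hz1
  have hform : ∑ k ∈ Finset.Icc 1 N, z ^ k = (z^(N+1) - z)/(z-1) := by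
    have he : Finset.Icc 1 N = (Finset.range (N+1)).erase 0 := by
      ext k; simp [Nat.lt_succ_iff, Nat.one_le_iff_ne_zero, and_comm]
    rw [he, Finset.sum_erase_eq_sub (by simp), geom_sum_eq hz1]
    field_simp
    ring
  rw [hform, norm_div, norm_sub_rev (1:K)]
  gcongr
  calc ‖z^(N+1) - z‖ ≤ ‖z^(N+1)‖ + ‖z‖ := norm_sub_le _ _
    _ ≤ 1 + 1 := by
        rw [norm_pow]
        have := pow_le_one₀ (norm_nonneg z) hz (n := N+1)
        linarith
    _ = 2 := by norm_num

noncomputable def zeta (φ x : ℝ) : ℂ := -(x : ℂ) * Complex.exp (φ * Complex.I)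

lemma zeta_re (φ x : ℝ) : (zeta φ x).re = -(x * Real.cos φ) := by
  simp [zeta, Complex.exp_ofReal_mul_I_re, Complex.exp_ofReal_mul_I_im]

lemma zeta_im (φ x : ℝ) : (zeta φ x).im = -(x * Real.sin φ) := by
  simp [zeta, Complex.exp_ofReal_mul_I_re, Complex.exp_ofReal_mul_I_im]

lemma zeta_norm (φ x : ℝ) (hx : 0 ≤ x) : ‖zeta φ x‖ = x := by
  simp [zeta, map_mul, Complex.norm_exp_ofReal_mul_I, abs_of_nonneg hx]

lemma zeta_continuous (φ r : ℝ) : Continuous (fun t : ℝ => zeta φ (r*t)) := by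
  unfold zeta
  exact ((Complex.continuous_ofReal.comp (continuous_const.mul continuous_id)).neg).mul
    continuous_const

lemma normSq_one_sub_zeta (φ x : ℝ) :
    Complex.normSq (1 - zeta φ x) = 1 + 2*x*Real.cos φ + x^2 := by
  rw [Complex.normSq_apply, Complex.sub_re, Complex.sub_im, zeta_re, zeta_im]
  simp only [Complex.one_re, Complex.one_im]
  nlinarith [Real.sin_sq_add_cos_sq φ]

lemma norm_one_sub_zeta_ge (φ x : ℝ) (hφ : 0 ≤ Real.sin φ) : Real.sin φ ≤ ‖1 - zeta φ x‖ := by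
  have h : Real.sin φ ^ 2 ≤ Complex.normSq (1 - zeta φ x) := by
    rw [normSq_one_sub_zeta]
    nlinarith [Real.sin_sq_add_cos_sq φ, sq_nonneg (x + Real.cos φ)]
  rw [Complex.norm_def]
  exact (Real.le_sqrt hφ (Complex.normSq_nonneg _)).mpr (by simpa [sq] using h)

lemma one_sub_zeta_ne (φ x : ℝ) (hφ : 0 < Real.sin φ) : 1 - zeta φ x ≠ 0 := by
  intro h
  have := norm_one_sub_zeta_ge φ x hφ.le
  rw [h] at this
  simp at this
  linarith

lemma zeta_pow_re (φ x : ℝ) (k : ℕ) : ((zeta φ x) ^ k).re = (-x)^k * Real.cos (k * φ) := by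
  have : (zeta φ x) ^ k = ((-x : ℝ) : ℂ)^k * Complex.exp ((k * φ : ℝ) * Complex.I) := by
    rw [zeta, mul_pow, ← Complex.exp_nat_mul]
    push_cast
    ring_nf
  rw [this, ← Complex.ofReal_pow, Complex.re_ofReal_mul, Complex.exp_ofReal_mul_I_re]

lemma Fsum_eq (r φ t : ℝ) (N : ℕ) :
    ∑ k ∈ Finset.Icc 1 N, (-1:ℝ)^(k+1) * r^k * (1 - Real.cos (k*φ)) * t^(k+1)
      = t * ( -(∑ k ∈ Finset.Icc 1 N, (-(r*t))^k)
            + (∑ k ∈ Finset.Icc 1 N, (zeta φ (r*t))^k).re ) := by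
  rw [Complex.re_sum, ← Finset.sum_neg_distrib, ← Finset.sum_add_distrib, Finset.mul_sum]
  refine Finset.sum_congr rfl (fun k _ => ?_)
  rw [zeta_pow_re]
  have h1 : (-(r*t))^k = (-1:ℝ)^k * (r*t)^k := by rw [neg_pow]
  rw [h1, mul_pow, pow_succ]
  ring

end helpers

/-- Main inequality of the paper: for `0 < r ≤ 1` and `0 < φ < π`,
`∑_{k=1}^∞ (-1)^{k+1} r^k cos(kφ)/(k+2) < ∑_{k=1}^∞ (-1)^{k+1} r^k/(k+2)`,
where the series are understood as limits of partial sums. -/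
theorem stmt_0 (r φ : ℝ) (hr0 : 0 < r) (hr1 : r ≤ 1) (hφ0 : 0 < φ) (hφπ : φ < π)
    (A B : ℝ)
    (hA : Tendsto (fun N : ℕ => ∑ k ∈ Finset.Icc 1 N,
        (-1 : ℝ) ^ (k + 1) * r ^ k * Real.cos ((k : ℝ) * φ) / ((k : ℝ) + 2)) atTop (nhds A))
    (hB : Tendsto (fun N : ℕ => ∑ k ∈ Finset.Icc 1 N,
        (-1 : ℝ) ^ (k + 1) * r ^ k / ((k : ℝ) + 2)) atTop (nhds B)) :
    A < B := by
  have hsin : 0 < Real.sin φ := Real.sin_pos_of_pos_of_lt_pi hφ0 hφπ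
  have hcos1 : Real.cos φ < 1 := by
    have hne : Real.cos φ ≠ 1 := by
      intro h
      have hπ := Real.pi_pos
      rw [Real.cos_eq_one_iff_of_lt_of_lt (by linarith) (by linarith)] at h
      linarith
    exact lt_of_le_of_ne (Real.cos_le_one φ) hne
  set F : ℕ → ℝ → ℝ := fun N t => ∑ k ∈ Finset.Icc 1 N,
    (-1:ℝ)^(k+1) * r^k * (1 - Real.cos (k*φ)) * t^(k+1) with hF
  set g : ℝ → ℝ := fun t =>
    t * ( (r*t)/(1+r*t) + ((zeta φ (r*t))/(1 - zeta φ (r*t))).re ) with hg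
  -- partial sums of the difference series equal interval integrals of F N
  have hstep2 : ∀ N : ℕ,
      ∑ k ∈ Finset.Icc 1 N, (-1:ℝ)^(k+1) * r^k * (1 - Real.cos (k*φ)) / ((k:ℝ)+2)
        = ∫ t in (0:ℝ)..1, F N t := by
    intro N
    simp only [hF]
    rw [intervalIntegral.integral_finset_sum (fun k _ =>
      Continuous.intervalIntegrable (by fun_prop) 0 1)]
    refine Finset.sum_congr rfl (fun k _ => ?_)
    rw [intervalIntegral.integral_const_mul, integral_pow]
    have hk : ((k:ℝ)+2) ≠ 0 := by positivity
    rw [one_pow, zero_pow (by omega)]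
    push_cast
    rw [sub_zero, show ((k:ℝ) + 1 + 1) = (k:ℝ) + 2 from by ring]
    ring
  -- continuity of g on [0,1]
  have hgcont : ContinuousOn g (Set.Icc 0 1) := by
    simp only [hg]
    apply ContinuousOn.mul continuousOn_id
    apply ContinuousOn.add
    · apply ContinuousOn.div (by fun_prop) (by fun_prop)
      intro t ht
      have h0 : 0 ≤ r * t := mul_nonneg hr0.le ht.1
      exact ne_of_gt (by linarith)
    · apply Continuous.continuousOn
      exact Complex.continuous_re.comp ((zeta_continuous φ r).div
        (continuous_const.sub (zeta_continuous φ r))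
        (fun t => one_sub_zeta_ne φ (r*t) hsin))
  -- dominated convergence
  have hdct : Tendsto (fun N => ∫ t in (0:ℝ)..1, F N t) atTop
      (nhds (∫ t in (0:ℝ)..1, g t)) := by
    apply intervalIntegral.tendsto_integral_filter_of_dominated_convergence
      (bound := fun _ => 2 + 2 / Real.sin φ)
    · filter_upwards with N
      have hc : Continuous (F N) := by
        simp only [hF]
        exact continuous_finset_sum _ (fun k _ => by fun_prop)
      exact hc.aestronglyMeasurable.restrict
    · filter_upwards with N
      refine ae_of_all _ (fun t ht => ?_)
      rw [Set.uIoc_of_le (by norm_num : (0:ℝ) ≤ 1)] at ht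
      have ht0 : 0 < t := ht.1
      have ht1 : t ≤ 1 := ht.2
      have hx0 : 0 ≤ r * t := mul_nonneg hr0.le ht0.le
      have hx1 : r * t ≤ 1 := by nlinarith
      simp only [hF]
      rw [Real.norm_eq_abs, Fsum_eq]
      have b1 : |∑ k ∈ Finset.Icc 1 N, (-(r*t))^k| ≤ 2 := by
        have hne : (-(r*t)) ≠ 1 := by intro h; nlinarith [h]
        have hb := geom_icc_norm_le (K := ℝ) (z := -(r*t)) (by
          rw [Real.norm_eq_abs, abs_neg, abs_of_nonneg hx0]; exact hx1) hne N
        rw [Real.norm_eq_abs, Real.norm_eq_abs] at hb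
        have hden : |(1:ℝ) - -(r*t)| = 1 + r*t := by
          rw [sub_neg_eq_add, abs_of_nonneg (by linarith)]
        rw [hden] at hb
        have h2 : 2 / (1 + r*t) ≤ 2 := by
          rw [div_le_iff₀ (by linarith)]; nlinarith
        linarith
      have b2 : |(∑ k ∈ Finset.Icc 1 N, (zeta φ (r*t))^k).re| ≤ 2 / Real.sin φ := by
        have hne : zeta φ (r*t) ≠ 1 := by
          intro h
          exact one_sub_zeta_ne φ (r*t) hsin (by rw [h]; ring)
        have hb := geom_icc_norm_le (z := zeta φ (r*t))
          (by rw [zeta_norm φ _ hx0]; exact hx1) hne N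
        have habs := Complex.abs_re_le_norm (∑ k ∈ Finset.Icc 1 N, (zeta φ (r*t))^k)
        have hle : 2 / ‖1 - zeta φ (r*t)‖ ≤ 2 / Real.sin φ := by
          apply div_le_div_of_nonneg_left (by norm_num) hsin
          exact norm_one_sub_zeta_ge φ _ hsin.le
        calc |(∑ k ∈ Finset.Icc 1 N, (zeta φ (r*t))^k).re|
            ≤ ‖∑ k ∈ Finset.Icc 1 N, (zeta φ (r*t))^k‖ := habs
          _ ≤ 2 / ‖1 - zeta φ (r*t)‖ := hb
          _ ≤ 2 / Real.sin φ := hle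
      calc |t * ( -(∑ k ∈ Finset.Icc 1 N, (-(r*t))^k)
              + (∑ k ∈ Finset.Icc 1 N, (zeta φ (r*t))^k).re )|
          ≤ |t| * (|∑ k ∈ Finset.Icc 1 N, (-(r*t))^k|
              + |(∑ k ∈ Finset.Icc 1 N, (zeta φ (r*t))^k).re|) := by
            rw [abs_mul]
            gcongr
            exact (abs_add_le _ _).trans (by rw [abs_neg])
        _ ≤ 1 * (2 + 2 / Real.sin φ) := by
            apply mul_le_mul (by rw [abs_of_pos ht0]; exact ht1) (by linarith)
              (by positivity) (by norm_num)
        _ = 2 + 2 / Real.sin φ := by ring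
    · exact intervalIntegrable_const
    · have hae2 : ∀ᵐ t : ℝ ∂volume, t ≠ 1 := by
        rw [ae_iff]
        have he : {t : ℝ | ¬ t ≠ 1} = {1} := by ext t; simp
        rw [he]
        exact measure_singleton 1
      filter_upwards [hae2] with t htne ht
      rw [Set.uIoc_of_le (by norm_num : (0:ℝ) ≤ 1)] at ht
      have ht0 : 0 < t := ht.1
      have ht1 : t < 1 := lt_of_le_of_ne ht.2 htne
      have hx0 : 0 ≤ r * t := mul_nonneg hr0.le ht0.le
      have hx1 : r * t < 1 := by nlinarith
      have hw : ‖(-(r*t) : ℝ)‖ < 1 := by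
        rw [Real.norm_eq_abs, abs_neg, abs_of_nonneg hx0]; exact hx1
      have hz : ‖zeta φ (r*t)‖ < 1 := by rw [zeta_norm φ _ hx0]; exact hx1
      have t1 := geom_icc_tendsto hw
      have t2 : Tendsto (fun N : ℕ => (∑ k ∈ Finset.Icc 1 N, (zeta φ (r*t))^k).re) atTop
          (nhds ((zeta φ (r*t) / (1 - zeta φ (r*t))).re)) :=
        (Complex.continuous_re.tendsto _).comp (geom_icc_tendsto hz)
      have tcomb : Tendsto (fun N : ℕ => t * ( -(∑ k ∈ Finset.Icc 1 N, (-(r*t))^k)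
            + (∑ k ∈ Finset.Icc 1 N, (zeta φ (r*t))^k).re )) atTop
          (nhds (t * ( -((-(r*t))/(1 - -(r*t)))
            + (zeta φ (r*t) / (1 - zeta φ (r*t))).re ))) :=
        (tendsto_const_nhds (x := t)).mul ((t1.neg).add t2)
      have hfun : (fun N : ℕ => F N t) = (fun N : ℕ =>
          t * ( -(∑ k ∈ Finset.Icc 1 N, (-(r*t))^k)
            + (∑ k ∈ Finset.Icc 1 N, (zeta φ (r*t))^k).re )) :=
        funext fun N => by simp only [hF]; exact Fsum_eq r φ t N
      have hgt : g t = t * ( -((-(r*t))/(1 - -(r*t)))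
            + (zeta φ (r*t) / (1 - zeta φ (r*t))).re ) := by
        simp only [hg]
        rw [sub_neg_eq_add, neg_div, neg_neg]
      rw [hfun, hgt]
      exact tcomb
  -- difference of partial sums
  have hdiff : ∀ N : ℕ,
      (∑ k ∈ Finset.Icc 1 N, (-1:ℝ)^(k+1) * r^k / ((k:ℝ)+2))
        - (∑ k ∈ Finset.Icc 1 N, (-1:ℝ)^(k+1) * r^k * Real.cos ((k:ℝ)*φ) / ((k:ℝ)+2))
        = ∑ k ∈ Finset.Icc 1 N, (-1:ℝ)^(k+1) * r^k * (1 - Real.cos (k*φ)) / ((k:ℝ)+2) := by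
    intro N
    rw [← Finset.sum_sub_distrib]
    refine Finset.sum_congr rfl (fun k _ => ?_)
    have hk : ((k:ℝ)+2) ≠ 0 := by positivity
    field_simp
  -- identify B - A with the integral of g
  have hBA : B - A = ∫ t in (0:ℝ)..1, g t := by
    have h1 : Tendsto (fun N : ℕ =>
        (∑ k ∈ Finset.Icc 1 N, (-1:ℝ)^(k+1) * r^k / ((k:ℝ)+2))
        - (∑ k ∈ Finset.Icc 1 N, (-1:ℝ)^(k+1) * r^k * Real.cos ((k:ℝ)*φ) / ((k:ℝ)+2)))
        atTop (nhds (B - A)) := hB.sub hA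
    have h2 : (fun N : ℕ =>
        (∑ k ∈ Finset.Icc 1 N, (-1:ℝ)^(k+1) * r^k / ((k:ℝ)+2))
        - (∑ k ∈ Finset.Icc 1 N, (-1:ℝ)^(k+1) * r^k * Real.cos ((k:ℝ)*φ) / ((k:ℝ)+2)))
        = fun N => ∫ t in (0:ℝ)..1, F N t := by
      funext N; rw [hdiff N, hstep2 N]
    rw [h2] at h1
    exact tendsto_nhds_unique h1 hdct
  -- positivity of the integral of g
  have hpos : 0 < ∫ t in (0:ℝ)..1, g t := by
    apply intervalIntegral.intervalIntegral_pos_of_pos_on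
    · exact ContinuousOn.intervalIntegrable
        (by rw [Set.uIcc_of_le (by norm_num : (0:ℝ) ≤ 1)]; exact hgcont)
    · intro t ht
      have ht0 : 0 < t := ht.1
      have ht1 : t < 1 := ht.2
      have hx0 : 0 < r * t := mul_pos hr0 ht0
      have hx1 : r * t < 1 := by nlinarith
      have hnsqpos : 0 < 1 + 2*(r*t)*Real.cos φ + (r*t)^2 := by
        nlinarith [Real.sin_sq_add_cos_sq φ, sq_nonneg (r*t + Real.cos φ), hsin]
      have hre : ((zeta φ (r*t))/(1 - zeta φ (r*t))).re
          = -((r*t)*Real.cos φ + (r*t)^2) / (1 + 2*(r*t)*Real.cos φ + (r*t)^2) := by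
        rw [Complex.div_re, normSq_one_sub_zeta, Complex.sub_re, Complex.sub_im,
          zeta_re, zeta_im]
        simp only [Complex.one_re, Complex.one_im]
        rw [← add_div]
        congr 1
        nlinarith [Real.sin_sq_add_cos_sq φ]
      simp only [hg]
      rw [hre]
      have key : 0 < (r*t)/(1+r*t)
          + -((r*t)*Real.cos φ + (r*t)^2) / (1 + 2*(r*t)*Real.cos φ + (r*t)^2) := by
        rw [neg_div, ← sub_eq_add_neg, sub_pos, div_lt_div_iff₀ hnsqpos (by linarith)]
        nlinarith [mul_pos (mul_pos hx0 (by linarith : (0:ℝ) < 1 - Real.cos φ))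
          (by linarith : (0:ℝ) < 1 - r*t)]
      exact mul_pos ht0 key
    · norm_num
  linarith
end

section
/- For every real φ with 0 < φ < π, ∑_{n=1}^∞ (-1)^{n-1} cos(nφ)/(n+2) < log 2 − 1/2. -/
open Real Filter

namespace Stmt1Aux

open MeasureTheory intervalIntegral Complex

lemma sum_Icc_pow (x : ℂ) (N : ℕ) :
    ∑ n ∈ Finset.Icc 1 N, x ^ n = (∑ n ∈ Finset.range (N + 1), x ^ n) - 1 := by
  induction N with
  | zero => simp
  | succ N ih =>
      rw [Finset.sum_Icc_succ_top (by omega : 1 ≤ N + 1), ih,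
        Finset.sum_range_succ (fun n => x ^ n) (N + 1)]
      ring

lemma ae_ne_one : ∀ᵐ x : ℝ, x ≠ (1 : ℝ) := by
  rw [MeasureTheory.ae_iff]
  have h : {x : ℝ | ¬x ≠ 1} = {(1 : ℝ)} := by ext x; simp
  rw [h]
  exact Real.volume_singleton

end Stmt1Aux

/-- Case `r = 1` of the main inequality:
`∑_{n=1}^∞ (-1)^{n-1} cos(nφ)/(n+2) < log 2 - 1/2` for `0 < φ < π`. -/
theorem stmt_1 (φ : ℝ) (hφ0 : 0 < φ) (hφπ : φ < π) (A : ℝ)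
    (hA : Tendsto (fun N : ℕ => ∑ n ∈ Finset.Icc 1 N,
        (-1 : ℝ) ^ (n + 1) * Real.cos ((n : ℝ) * φ) / ((n : ℝ) + 2)) atTop (nhds A)) :
    A < Real.log 2 - 1 / 2 := by
  open MeasureTheory intervalIntegral in
  set c : ℝ := Real.cos φ with hcdef
  set s : ℝ := Real.sin φ with hsdef
  have hs : 0 < s := Real.sin_pos_of_pos_of_lt_pi hφ0 hφπ
  have hc1 : c < 1 := by
    have := Real.cos_lt_cos_of_nonneg_of_le_pi le_rfl hφπ.le hφ0
    simpa using this
  have hcs : c ^ 2 + s ^ 2 = 1 := Real.cos_sq_add_sin_sq φ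
  -- the complex unit
  set e : ℂ := Complex.exp (φ * Complex.I) with hedef
  have he_re : e.re = c := Complex.exp_ofReal_mul_I_re φ
  have he_im : e.im = s := Complex.exp_ofReal_mul_I_im φ
  have he_norm : ‖e‖ = 1 := Complex.norm_exp_ofReal_mul_I φ
  -- denominator facts
  have hDpos : ∀ t : ℝ, 0 < 1 + 2 * t * c + t ^ 2 := by
    intro t; nlinarith [sq_nonneg (t + c), hs, hcs, sq_nonneg s]
  have hre1 : ∀ t : ℝ, ((1 : ℂ) + t * e).re = 1 + t * c := by
    intro t; simp [Complex.add_re, Complex.mul_re, he_re, he_im]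
  have him1 : ∀ t : ℝ, ((1 : ℂ) + t * e).im = t * s := by
    intro t; simp [Complex.add_im, Complex.mul_im, he_re, he_im]
  have hnsq : ∀ t : ℝ, Complex.normSq (1 + (t : ℂ) * e) = 1 + 2 * t * c + t ^ 2 := by
    intro t
    rw [Complex.normSq_apply, hre1, him1]
    linear_combination (t ^ 2) * hcs
  have hlow : ∀ t : ℝ, s ≤ ‖(1 : ℂ) + t * e‖ := by
    intro t
    have h2 : ‖(1 : ℂ) + t * e‖ ^ 2 = 1 + 2 * t * c + t ^ 2 := by
      rw [Complex.sq_norm, hnsq]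
    nlinarith [norm_nonneg ((1 : ℂ) + t * e), sq_nonneg (t + c), hcs]
  have hne1 : ∀ t : ℝ, -((t : ℂ) * e) ≠ 1 := by
    intro t h
    have h0 : (1 : ℂ) + t * e = 0 := by linear_combination -h
    have := hlow t
    rw [h0] at this
    simp at this
    linarith
  -- the partial sums as functions of t
  set S : ℕ → ℝ → ℝ := fun N t =>
    ∑ n ∈ Finset.Icc 1 N, ((-1 : ℝ) ^ (n + 1) * Real.cos (n * φ)) * t ^ (n + 1) with hSdef
  -- the limit function
  set f : ℝ → ℝ := fun t => t ^ 2 * (c + t) / (1 + 2 * t * c + t ^ 2) with hfdef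
  -- complex representation of powers
  have hx : ∀ (t : ℝ) (n : ℕ), (-((t : ℂ) * e)) ^ n
      = (((-1 : ℝ) ^ n * t ^ n : ℝ) : ℂ) * Complex.exp (((n : ℝ) * φ : ℝ) * Complex.I) := by
    intro t n
    rw [neg_pow, mul_pow, hedef, ← Complex.exp_nat_mul]
    push_cast
    ring_nf
  -- real partial sum equals real part of complex sum
  have hS : ∀ (t : ℝ) (N : ℕ),
      S N t = (-(t : ℂ) * ∑ n ∈ Finset.Icc 1 N, (-((t : ℂ) * e)) ^ n).re := by
    intro t N
    rw [Finset.mul_sum, Complex.re_sum]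
    apply Finset.sum_congr rfl
    intro n _
    rw [hx]
    have : (-(t : ℂ) * ((((-1 : ℝ) ^ n * t ^ n : ℝ) : ℂ)
        * Complex.exp (((n : ℝ) * φ : ℝ) * Complex.I)))
        = ((-(t * ((-1 : ℝ) ^ n * t ^ n)) : ℝ) : ℂ)
          * Complex.exp (((n : ℝ) * φ : ℝ) * Complex.I) := by
      push_cast; ring
    rw [this, Complex.re_ofReal_mul, Complex.exp_ofReal_mul_I_re]
    ring
  -- closed form of the complex sum
  have hgeom : ∀ (t : ℝ) (N : ℕ),
      ∑ n ∈ Finset.Icc 1 N, (-((t : ℂ) * e)) ^ n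
        = ((-((t : ℂ) * e)) ^ (N + 1) - 1) / (-((t : ℂ) * e) - 1) - 1 := by
    intro t N
    rw [Stmt1Aux.sum_Icc_pow, geom_sum_eq (hne1 t)]
  -- bound for DCT
  have hbound : ∀ (N : ℕ) (t : ℝ), 0 ≤ t → t ≤ 1 → ‖S N t‖ ≤ 2 / s + 1 := by
    intro N t ht0 ht1
    rw [hS, hgeom]
    set x : ℂ := -((t : ℂ) * e) with hxdef
    have hxnorm : ‖x‖ = t := by
      rw [hxdef, norm_neg, norm_mul, he_norm, Complex.norm_real]
      simp [abs_of_nonneg ht0]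
    have hden : s ≤ ‖x - 1‖ := by
      have : x - 1 = -(1 + (t : ℂ) * e) := by rw [hxdef]; ring
      rw [this, norm_neg]
      exact hlow t
    have hnum : ‖x ^ (N + 1) - 1‖ ≤ 2 := by
      calc ‖x ^ (N + 1) - 1‖ ≤ ‖x ^ (N + 1)‖ + ‖(1 : ℂ)‖ := norm_sub_le _ _
        _ ≤ 1 + 1 := by
            rw [norm_pow, hxnorm, norm_one]
            have : t ^ (N + 1) ≤ 1 := pow_le_one₀ ht0 ht1
            linarith
        _ = 2 := by norm_num
    have hq : ‖(x ^ (N + 1) - 1) / (x - 1)‖ ≤ 2 / s := by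
      rw [norm_div]
      exact div_le_div₀ (by norm_num) hnum hs hden
    calc ‖(-(t : ℂ) * ((x ^ (N + 1) - 1) / (x - 1) - 1)).re‖
        ≤ ‖-(t : ℂ) * ((x ^ (N + 1) - 1) / (x - 1) - 1)‖ := by
          exact Complex.abs_re_le_norm _
      _ = t * ‖(x ^ (N + 1) - 1) / (x - 1) - 1‖ := by
          rw [norm_mul, norm_neg, Complex.norm_real, Real.norm_eq_abs, abs_of_nonneg ht0]
      _ ≤ 1 * (2 / s + 1) := by
          apply mul_le_mul ht1 _ (norm_nonneg _) (by norm_num)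
          calc ‖(x ^ (N + 1) - 1) / (x - 1) - 1‖
              ≤ ‖(x ^ (N + 1) - 1) / (x - 1)‖ + ‖(1 : ℂ)‖ := norm_sub_le _ _
            _ ≤ 2 / s + 1 := by rw [norm_one]; linarith
      _ = 2 / s + 1 := one_mul _
  -- pointwise limit for 0 ≤ t < 1
  have hlim : ∀ t : ℝ, 0 ≤ t → t < 1 →
      Tendsto (fun N => S N t) atTop (nhds (f t)) := by
    intro t ht0 ht1
    set x : ℂ := -((t : ℂ) * e) with hxdef
    have hxnorm : ‖x‖ < 1 := by
      rw [hxdef, norm_neg, norm_mul, he_norm, Complex.norm_real]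
      simpa [abs_of_nonneg ht0] using ht1
    have hx1 : x - 1 ≠ 0 := sub_ne_zero.2 (hne1 t)
    have hpow : Tendsto (fun N : ℕ => x ^ (N + 1)) atTop (nhds 0) :=
      (tendsto_pow_atTop_nhds_zero_of_norm_lt_one hxnorm).comp (tendsto_add_atTop_nat 1)
    have hc' : Tendsto (fun N : ℕ =>
        (-(t : ℂ) * ((x ^ (N + 1) - 1) / (x - 1) - 1))) atTop
        (nhds (-(t : ℂ) * (((0 : ℂ) - 1) / (x - 1) - 1))) := by
      exact (((hpow.sub_const 1).div_const (x - 1)).sub_const 1).const_mul _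
    have hre : Tendsto (fun N : ℕ =>
        (-(t : ℂ) * ((x ^ (N + 1) - 1) / (x - 1) - 1)).re) atTop
        (nhds ((-(t : ℂ) * (((0 : ℂ) - 1) / (x - 1) - 1)).re)) :=
      (Complex.continuous_re.tendsto _).comp hc'
    have hval : (-(t : ℂ) * (((0 : ℂ) - 1) / (x - 1) - 1)).re = f t := by
      have hw : (1 : ℂ) + (t : ℂ) * e ≠ 0 := by
        intro h0
        have := hlow t
        rw [h0] at this
        simp at this
        linarith
      have hcx : -(t : ℂ) * (((0 : ℂ) - 1) / (x - 1) - 1)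
          = ((t : ℂ) ^ 2 * e) / (1 + (t : ℂ) * e) := by
        rw [hxdef]
        have hq : ((0 : ℂ) - 1) / (-((t : ℂ) * e) - 1) = (1 + (t : ℂ) * e)⁻¹ := by
          rw [show ((0 : ℂ) - 1) = -1 by ring, show -((t : ℂ) * e) - 1 = -(1 + (t : ℂ) * e) by ring,
            neg_div_neg_eq, one_div]
        rw [hq, eq_div_iff hw]
        linear_combination (-(t : ℂ)) * inv_mul_cancel₀ hw
      rw [hcx]
      have hz_re : ((t : ℂ) ^ 2 * e).re = t ^ 2 * c := by
        have : ((t : ℂ) ^ 2 * e) = ((t ^ 2 : ℝ) : ℂ) * e := by push_cast; ring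
        rw [this, Complex.re_ofReal_mul, he_re]
      have hz_im : ((t : ℂ) ^ 2 * e).im = t ^ 2 * s := by
        have : ((t : ℂ) ^ 2 * e) = ((t ^ 2 : ℝ) : ℂ) * e := by push_cast; ring
        rw [this, Complex.im_ofReal_mul, he_im]
      rw [Complex.div_re, hnsq, hz_re, hz_im, hre1, him1, hfdef]
      have hD := (hDpos t).ne'
      field_simp
      linear_combination t ^ 3 * (1 + t * c * 2 + t ^ 2)⁻¹ * hcs
    rw [← hval]
    have : (fun N => S N t) = fun N : ℕ =>
        (-(t : ℂ) * ((x ^ (N + 1) - 1) / (x - 1) - 1)).re := by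
      funext N; rw [hS, hgeom]
    rw [this]
    exact hre
  -- dominated convergence
  have hScont : ∀ N, Continuous (S N) := by
    intro N
    exact continuous_finset_sum _ fun n _ => continuous_const.mul (continuous_pow (n + 1))
  have hfcont : Continuous f := by
    exact Continuous.div (by fun_prop) (by fun_prop) fun t => (hDpos t).ne'
  have hdct : Tendsto (fun N => ∫ t in (0:ℝ)..1, S N t) atTop
      (nhds (∫ t in (0:ℝ)..1, f t)) := by
    apply intervalIntegral.tendsto_integral_filter_of_dominated_convergence (fun _ : ℝ => 2 / s + 1)
    · exact Eventually.of_forall fun N => (hScont N).aestronglyMeasurable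
    · refine Eventually.of_forall fun N => Eventually.of_forall fun t ht => ?_
      rw [Set.uIoc_of_le (by norm_num : (0:ℝ) ≤ 1)] at ht
      exact hbound N t ht.1.le ht.2
    · exact intervalIntegrable_const
    · filter_upwards [Stmt1Aux.ae_ne_one] with t ht1 ht
      rw [Set.uIoc_of_le (by norm_num : (0:ℝ) ≤ 1)] at ht
      exact hlim t ht.1.le (lt_of_le_of_ne ht.2 ht1)
  -- integral of partial sums equals partial sums of the series
  have hint : ∀ N, ∫ t in (0:ℝ)..1, S N t
      = ∑ n ∈ Finset.Icc 1 N, (-1 : ℝ) ^ (n + 1) * Real.cos ((n : ℝ) * φ) / ((n : ℝ) + 2) := by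
    intro N
    rw [hSdef]
    rw [intervalIntegral.integral_finset_sum]
    · apply Finset.sum_congr rfl
      intro n _
      rw [intervalIntegral.integral_const_mul, integral_pow]
      have h0 : ((0:ℝ)) ^ (n + 1 + 1) = 0 := by norm_num
      rw [h0, one_pow]
      push_cast
      ring
    · intro n _
      exact (continuous_const.mul (continuous_pow (n + 1))).intervalIntegrable _ _
  -- hence A is the integral of f
  have hAeq : A = ∫ t in (0:ℝ)..1, f t := by
    apply tendsto_nhds_unique hA
    have : (fun N : ℕ => ∑ n ∈ Finset.Icc 1 N,
        (-1 : ℝ) ^ (n + 1) * Real.cos ((n : ℝ) * φ) / ((n : ℝ) + 2))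
        = fun N => ∫ t in (0:ℝ)..1, S N t := by
      funext N; rw [hint]
    rw [this]
    exact hdct
  -- the right-hand side as an integral
  have hlog : Real.log 2 - 1 / 2 = ∫ t in (0:ℝ)..1, t ^ 2 / (1 + t) := by
    have hinv : (∫ t in (0:ℝ)..1, (1 + t)⁻¹) = Real.log 2 := by
      have h := intervalIntegral.integral_comp_add_right (a := (0:ℝ)) (b := 1)
        (fun x : ℝ => x⁻¹) 1
      simp only [zero_add] at h
      have h2 : (∫ t in (0:ℝ)..1, (1 + t)⁻¹) = ∫ t in (0:ℝ)..1, (t + 1)⁻¹ := by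
        apply intervalIntegral.integral_congr
        intro t _; simp [add_comm]
      rw [h2, h, integral_inv_of_pos one_pos (by norm_num : (0:ℝ) < 1 + 1)]
      norm_num
    have hsplit : (∫ t in (0:ℝ)..1, t ^ 2 / (1 + t))
        = ∫ t in (0:ℝ)..1, ((t - 1) + (1 + t)⁻¹) := by
      apply intervalIntegral.integral_congr
      intro t ht
      rw [Set.uIcc_of_le (by norm_num : (0:ℝ) ≤ 1)] at ht
      have h1t : (1 : ℝ) + t ≠ 0 := by nlinarith [ht.1]
      field_simp
      ring
    have hi1 : IntervalIntegrable (fun t : ℝ => t - 1) volume 0 1 :=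
      (continuous_id.sub continuous_const).intervalIntegrable _ _
    have hi2 : IntervalIntegrable (fun t : ℝ => (1 + t)⁻¹) volume 0 1 := by
      apply ContinuousOn.intervalIntegrable
      apply ContinuousOn.inv₀ (by fun_prop)
      intro t ht
      rw [Set.uIcc_of_le (by norm_num : (0:ℝ) ≤ 1)] at ht
      nlinarith [ht.1]
    rw [hsplit, intervalIntegral.integral_add hi1 hi2,
      intervalIntegral.integral_sub intervalIntegrable_id (intervalIntegrable_const),
      integral_id, intervalIntegral.integral_const, hinv]
    norm_num
    ring
  -- strict comparison of the integrals
  rw [hAeq, hlog]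
  apply intervalIntegral.integral_lt_integral_of_continuousOn_of_le_of_exists_lt
    (by norm_num : (0:ℝ) < 1) hfcont.continuousOn
  · apply ContinuousOn.div (by fun_prop) (by fun_prop)
    intro t ht
    nlinarith [ht.1]
  · intro t ht
    have ht0 : 0 < t := ht.1
    have ht1 : t ≤ 1 := ht.2
    rw [hfdef]
    rw [div_le_div_iff₀ (hDpos t) (by linarith : (0:ℝ) < 1 + t)]
    nlinarith [mul_nonneg (mul_nonneg (sq_nonneg t) (by linarith : (0:ℝ) ≤ 1 - c))
      (by linarith : (0:ℝ) ≤ 1 - t)]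
  · refine ⟨1/2, by norm_num, ?_⟩
    rw [hfdef]
    rw [div_lt_div_iff₀ (hDpos (1/2)) (by norm_num : (0:ℝ) < 1 + 1/2)]
    nlinarith [hc1]
end

section
/- Let h(φ) := log 2 − 1 + cos φ − (φ/2)·sin(2φ) − cos(2φ)·log(2 cos(φ/2)). Then h(φ) > 0 for all real φ with 0 < φ ≤ 1/3. -/
open Real

/-- Generic helper: if `f 0 = 0` and `f` has nonnegative derivative `f'` on `[0,∞)`,
then `f x ≥ 0` for `x ≥ 0`. -/
lemma aux_nonneg_of_deriv {f f' : ℝ → ℝ} (hd : ∀ t, HasDerivAt f (f' t) t)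
    (h0 : f 0 = 0) (hp : ∀ t, 0 ≤ t → 0 ≤ f' t) {x : ℝ} (hx : 0 ≤ x) : 0 ≤ f x := by
  have hmono : MonotoneOn f (Set.Ici (0 : ℝ)) := by
    apply monotoneOn_of_deriv_nonneg (convex_Ici 0)
    · exact fun t _ => (hd t).continuousAt.continuousWithinAt
    · exact fun t _ => ((hd t).differentiableAt).differentiableWithinAt
    · intro t ht
      rw [(hd t).deriv]
      rw [interior_Ici] at ht
      exact hp t (le_of_lt ht)
  calc (0 : ℝ) = f 0 := h0.symm
    _ ≤ f x := hmono (Set.mem_Ici.2 le_rfl) (Set.mem_Ici.2 hx) hx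

lemma aux_cos_ge_quad {x : ℝ} (hx : 0 ≤ x) : 1 - x ^ 2 / 2 ≤ Real.cos x := by
  have h := aux_nonneg_of_deriv (f := fun t => Real.cos t - (1 - t ^ 2 / 2))
    (f' := fun t => t - Real.sin t)
    (fun t => by
      have := (Real.hasDerivAt_cos t).sub
        ((hasDerivAt_const t (1:ℝ)).sub (((hasDerivAt_pow 2 t)).div_const 2))
      refine this.congr_deriv ?_; push_cast; ring)
    (by norm_num) (fun t ht => by have := Real.sin_le ht; show (0:ℝ) ≤ t - Real.sin t; linarith) hx
  linarith [h]

lemma aux_sin_ge_cubic {x : ℝ} (hx : 0 ≤ x) : x - x ^ 3 / 6 ≤ Real.sin x := by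
  have h := aux_nonneg_of_deriv (f := fun t => Real.sin t - (t - t ^ 3 / 6))
    (f' := fun t => Real.cos t - (1 - t ^ 2 / 2))
    (fun t => by
      have := (Real.hasDerivAt_sin t).sub
        ((hasDerivAt_id t).sub (((hasDerivAt_pow 3 t)).div_const 6))
      refine this.congr_deriv ?_; push_cast; ring)
    (by norm_num) (fun t ht => by have := aux_cos_ge_quad ht; show (0:ℝ) ≤ Real.cos t - (1 - t ^ 2 / 2); linarith) hx
  linarith [h]

lemma aux_cos_le_quartic (x : ℝ) : Real.cos x ≤ 1 - x ^ 2 / 2 + x ^ 4 / 24 := by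
  rcases le_total 0 x with hx | hx
  · have h := aux_nonneg_of_deriv
      (f := fun t => (1 - t ^ 2 / 2 + t ^ 4 / 24) - Real.cos t)
      (f' := fun t => Real.sin t - (t - t ^ 3 / 6))
      (fun t => by
        have := (((hasDerivAt_const t (1:ℝ)).sub (((hasDerivAt_pow 2 t)).div_const 2)).add
          (((hasDerivAt_pow 4 t)).div_const 24)).sub (Real.hasDerivAt_cos t)
        refine this.congr_deriv ?_; push_cast; ring)
      (by norm_num) (fun t ht => by have := aux_sin_ge_cubic ht; show (0:ℝ) ≤ Real.sin t - (t - t ^ 3 / 6); linarith) hx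
    linarith [h]
  · have hx' : 0 ≤ -x := by linarith
    have h := aux_nonneg_of_deriv
      (f := fun t => (1 - t ^ 2 / 2 + t ^ 4 / 24) - Real.cos t)
      (f' := fun t => Real.sin t - (t - t ^ 3 / 6))
      (fun t => by
        have := (((hasDerivAt_const t (1:ℝ)).sub (((hasDerivAt_pow 2 t)).div_const 2)).add
          (((hasDerivAt_pow 4 t)).div_const 24)).sub (Real.hasDerivAt_cos t)
        refine this.congr_deriv ?_; push_cast; ring)
      (by norm_num) (fun t ht => by have := aux_sin_ge_cubic ht; show (0:ℝ) ≤ Real.sin t - (t - t ^ 3 / 6); linarith) hx'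
    have hc : Real.cos (-x) = Real.cos x := Real.cos_neg x
    rw [hc] at h
    nlinarith [h]

lemma aux_sin_le_quintic {x : ℝ} (hx : 0 ≤ x) :
    Real.sin x ≤ x - x ^ 3 / 6 + x ^ 5 / 120 := by
  have h := aux_nonneg_of_deriv
    (f := fun t => (t - t ^ 3 / 6 + t ^ 5 / 120) - Real.sin t)
    (f' := fun t => (1 - t ^ 2 / 2 + t ^ 4 / 24) - Real.cos t)
    (fun t => by
      have := (((hasDerivAt_id t).sub (((hasDerivAt_pow 3 t)).div_const 6)).add
        (((hasDerivAt_pow 5 t)).div_const 120)).sub (Real.hasDerivAt_sin t)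
      refine this.congr_deriv ?_; push_cast; ring)
    (by norm_num) (fun t _ => by have := aux_cos_le_quartic t; show (0:ℝ) ≤ (1 - t ^ 2 / 2 + t ^ 4 / 24) - Real.cos t; linarith) hx
  linarith [h]

set_option maxHeartbeats 1000000 in
lemma aux_cos_ge_sextic {x : ℝ} (hx : 0 ≤ x) :
    1 - x ^ 2 / 2 + x ^ 4 / 24 - x ^ 6 / 720 ≤ Real.cos x := by
  have h := aux_nonneg_of_deriv
    (f := fun t => Real.cos t - (1 - t ^ 2 / 2 + t ^ 4 / 24 - t ^ 6 / 720))
    (f' := fun t => (t - t ^ 3 / 6 + t ^ 5 / 120) - Real.sin t)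
    (fun t => by
      have := (Real.hasDerivAt_cos t).sub
        ((((hasDerivAt_const t (1:ℝ)).sub (((hasDerivAt_pow 2 t)).div_const 2)).add
          (((hasDerivAt_pow 4 t)).div_const 24)).sub (((hasDerivAt_pow 6 t)).div_const 720))
      refine this.congr_deriv ?_; push_cast; ring)
    (by norm_num) (fun t ht => by have := aux_sin_le_quintic ht; show (0:ℝ) ≤ (t - t ^ 3 / 6 + t ^ 5 / 120) - Real.sin t; linarith) hx
  linarith [h]

set_option maxHeartbeats 1000000 in
/-- `h(φ) > 0` for `0 < φ ≤ 1/3`, where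
`h(φ) = log 2 - 1 + cos φ - (φ/2) sin(2φ) - cos(2φ) log(2 cos(φ/2))`. -/
theorem stmt_3 (φ : ℝ) (h1 : 0 < φ) (h2 : φ ≤ 1 / 3) :
    0 < Real.log 2 - 1 + Real.cos φ - (φ / 2) * Real.sin (2 * φ)
      - Real.cos (2 * φ) * Real.log (2 * Real.cos (φ / 2)) := by
  have hφ0 : (0:ℝ) ≤ φ := h1.le
  -- lower bound for cos φ
  have hcos : 1 - φ ^ 2 / 2 + φ ^ 4 / 24 - φ ^ 6 / 720 ≤ Real.cos φ := aux_cos_ge_sextic hφ0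
  -- upper bound for sin (2φ)
  have hsin2 : Real.sin (2 * φ) ≤ 2 * φ - (2 * φ) ^ 3 / 6 + (2 * φ) ^ 5 / 120 :=
    aux_sin_le_quintic (by linarith)
  -- bounds for cos (2φ)
  have hcos2ub : Real.cos (2 * φ) ≤ 1 - (2 * φ) ^ 2 / 2 + (2 * φ) ^ 4 / 24 :=
    aux_cos_le_quartic _
  have hcos2lb : (0:ℝ) ≤ Real.cos (2 * φ) := by
    have := aux_cos_ge_quad (x := 2 * φ) (by linarith)
    nlinarith
  -- bounds for cos (φ/2)
  have hcoshalf : Real.cos (φ / 2) ≤ 1 - (φ / 2) ^ 2 / 2 + (φ / 2) ^ 4 / 24 :=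
    aux_cos_le_quartic _
  have hcoshalfpos : 0 < Real.cos (φ / 2) := by
    have := aux_cos_ge_quad (x := φ / 2) (by linarith)
    nlinarith
  -- bound the logarithm
  have hlogsplit : Real.log (2 * Real.cos (φ / 2)) = Real.log 2 + Real.log (Real.cos (φ / 2)) :=
    Real.log_mul two_ne_zero (ne_of_gt hcoshalfpos)
  have hlogc : Real.log (Real.cos (φ / 2)) ≤ Real.cos (φ / 2) - 1 :=
    Real.log_le_sub_one_of_pos hcoshalfpos
  have hlt : Real.log 2 < 0.6931471808 := Real.log_two_lt_d9
  have hgt : (0.6931471803 : ℝ) < Real.log 2 := Real.log_two_gt_d9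
  have hV : (0:ℝ) ≤ Real.log 2 - φ ^ 2 / 8 + φ ^ 4 / 384 := by nlinarith
  have hLV : Real.log (2 * Real.cos (φ / 2)) ≤ Real.log 2 - φ ^ 2 / 8 + φ ^ 4 / 384 := by
    rw [hlogsplit]; nlinarith [hlogc, hcoshalf]
  -- bound the product
  have hprod : Real.cos (2 * φ) * Real.log (2 * Real.cos (φ / 2)) ≤
      (1 - 2 * φ ^ 2 + (2 / 3) * φ ^ 4) * (Real.log 2 - φ ^ 2 / 8 + φ ^ 4 / 384) := by
    have step1 : Real.cos (2 * φ) * Real.log (2 * Real.cos (φ / 2)) ≤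
        Real.cos (2 * φ) * (Real.log 2 - φ ^ 2 / 8 + φ ^ 4 / 384) :=
      mul_le_mul_of_nonneg_left hLV hcos2lb
    have hub' : Real.cos (2 * φ) ≤ 1 - 2 * φ ^ 2 + (2 / 3) * φ ^ 4 := by nlinarith [hcos2ub]
    have step2 : Real.cos (2 * φ) * (Real.log 2 - φ ^ 2 / 8 + φ ^ 4 / 384) ≤
        (1 - 2 * φ ^ 2 + (2 / 3) * φ ^ 4) * (Real.log 2 - φ ^ 2 / 8 + φ ^ 4 / 384) :=
      mul_le_mul_of_nonneg_right hub' hV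
    linarith
  have hsin2' : (φ / 2) * Real.sin (2 * φ) ≤
      (φ / 2) * (2 * φ - (2 * φ) ^ 3 / 6 + (2 * φ) ^ 5 / 120) :=
    mul_le_mul_of_nonneg_left hsin2 (by linarith)
  -- final polynomial inequality
  have hφ2 : φ ^ 2 ≤ 1 / 9 := by nlinarith
  have hcoefL : (0:ℝ) ≤ 2 * φ ^ 2 - 2 / 3 * φ ^ 4 := by nlinarith
  have hA : (2 * φ ^ 2 - 2 / 3 * φ ^ 4) * (0.6931471803 : ℝ) ≤
      (2 * φ ^ 2 - 2 / 3 * φ ^ 4) * Real.log 2 :=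
    mul_le_mul_of_nonneg_left hgt.le hcoefL
  have hp2 : (0:ℝ) < φ ^ 2 := by positivity
  have h4 : φ ^ 4 ≤ φ ^ 2 / 9 := by nlinarith [hφ2, hp2]
  have h6 : φ ^ 6 ≤ φ ^ 2 / 81 := by nlinarith [hφ2, h4, hp2]
  have h8 : φ ^ 8 ≤ φ ^ 2 / 729 := by nlinarith [hφ2, h6, hp2]
  have key2 : (0:ℝ) < (2 * φ ^ 2 - 2 / 3 * φ ^ 4) * (0.6931471803 : ℝ)
      - (11 / 8) * φ ^ 2 + (175 / 384) * φ ^ 4 - (133 / 2880) * φ ^ 6 - (1 / 576) * φ ^ 8 := by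
    norm_num
    linarith [h4, h6, h8, hp2]
  have expand : Real.log 2 - 1 + (1 - φ ^ 2 / 2 + φ ^ 4 / 24 - φ ^ 6 / 720)
      - (φ / 2) * (2 * φ - (2 * φ) ^ 3 / 6 + (2 * φ) ^ 5 / 120)
      - (1 - 2 * φ ^ 2 + (2 / 3) * φ ^ 4) * (Real.log 2 - φ ^ 2 / 8 + φ ^ 4 / 384)
      = (2 * φ ^ 2 - 2 / 3 * φ ^ 4) * Real.log 2
        - (11 / 8) * φ ^ 2 + (175 / 384) * φ ^ 4 - (133 / 2880) * φ ^ 6 - (1 / 576) * φ ^ 8 := by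
    ring
  have key : 0 < Real.log 2 - 1 + (1 - φ ^ 2 / 2 + φ ^ 4 / 24 - φ ^ 6 / 720)
      - (φ / 2) * (2 * φ - (2 * φ) ^ 3 / 6 + (2 * φ) ^ 5 / 120)
      - (1 - 2 * φ ^ 2 + (2 / 3) * φ ^ 4) * (Real.log 2 - φ ^ 2 / 8 + φ ^ 4 / 384) := by
    rw [expand]; linarith [hA, key2]
  linarith [hcos, hsin2', hprod, key]
end

section
/- Let h(φ) := log 2 − 1 + cos φ − (φ/2)·sin(2φ) − cos(2φ)·log(2 cos(φ/2)). Then h(φ) > 0 for all real φ with 3 ≤ φ < π. -/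
open Real

/-- `h(φ) > 0` for `3 ≤ φ < π`, where
`h(φ) = log 2 - 1 + cos φ - (φ/2) sin(2φ) - cos(2φ) log(2 cos(φ/2))`. -/
theorem stmt_4 (φ : ℝ) (h1 : 3 ≤ φ) (h2 : φ < π) :
    0 < Real.log 2 - 1 + Real.cos φ - (φ / 2) * Real.sin (2 * φ)
      - Real.cos (2 * φ) * Real.log (2 * Real.cos (φ / 2)) := by
  have hpi : π < 3.15 := pi_lt_d2
  have hpi3 : 3.14 < π := by have := pi_gt_d6; linarith
  have hlog2 : 0.6931471803 < Real.log 2 := log_two_gt_d9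
  -- t = 2π - 2φ ∈ (0, 0.3]
  set t : ℝ := 2 * π - 2 * φ with ht
  have ht0 : 0 < t := by simp only [ht]; linarith
  have ht1 : t ≤ 0.3 := by simp only [ht]; linarith
  have hcos2φ : Real.cos (2 * φ) = Real.cos t := by
    rw [← Real.cos_sub_two_pi (2 * φ), show 2 * φ - 2 * π = -t by ring, Real.cos_neg]
  have hsin2φ : Real.sin (2 * φ) = - Real.sin t := by
    rw [← Real.sin_sub_two_pi (2 * φ), show 2 * φ - 2 * π = -t by ring, Real.sin_neg]
  have hsint : 0 ≤ Real.sin t := Real.sin_nonneg_of_nonneg_of_le_pi ht0.le (by linarith)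
  have hcost : (0.95 : ℝ) ≤ Real.cos t := by
    have := Real.one_sub_sq_div_two_le_cos (x := t)
    nlinarith
  -- sin(2φ) ≤ 0, so the third term is ≥ 0
  have hterm3 : (φ / 2) * Real.sin (2 * φ) ≤ 0 := by
    rw [hsin2φ]
    have : 0 ≤ φ / 2 := by linarith
    nlinarith
  -- cos(3/2) < 1/8
  have hc32 : Real.cos (3 / 2) < 1 / 8 := by
    have h' : Real.sin (π / 2 - 3 / 2) < π / 2 - 3 / 2 :=
      Real.sin_lt (by linarith)
    rw [Real.sin_pi_div_two_sub] at h'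
    linarith
  have hφ2 : Real.cos (φ / 2) ≤ Real.cos (3 / 2) :=
    Real.cos_le_cos_of_nonneg_of_le_pi (by norm_num) (by linarith) (by linarith)
  have hφ2pos : 0 < Real.cos (φ / 2) :=
    Real.cos_pos_of_mem_Ioo ⟨by linarith, by linarith⟩
  have hlogle : Real.log (2 * Real.cos (φ / 2)) ≤ Real.log (1 / 4) := by
    apply Real.log_le_log (by linarith)
    linarith
  have hlog4 : Real.log (1 / 4) = -(2 * Real.log 2) := by
    rw [show (1 : ℝ) / 4 = (2 ^ 2 : ℝ)⁻¹ by norm_num, Real.log_inv, Real.log_pow]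
    push_cast; ring
  rw [hlog4] at hlogle
  have hcosφ : -1 ≤ Real.cos φ := Real.neg_one_le_cos φ
  -- bound the product term
  have hprod : Real.cos (2 * φ) * Real.log (2 * Real.cos (φ / 2)) ≤
      0.95 * (-(2 * Real.log 2)) := by
    rw [hcos2φ]
    nlinarith [hcost, hlogle, hlog2]
  nlinarith [hterm3, hprod, hcosφ, hlog2]
end

section
/- Let h be a differentiable real function on an interval [a, b] with |h'(x)| ≤ M for all x ∈ [a, b], where M > 0. If h(b) > 0, then h(x) > 0 for all x in the interval (max(a, b − h(b)/M), b]. -/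
open Set

/-- The Maximal Slope Principle: if `h` is differentiable on `[a, b]` with
`|h'| ≤ M` there (`M > 0`) and `h(b) > 0`, then `h > 0` on
`(max(a, b - h(b)/M), b]`. -/
theorem stmt_6 (a b M : ℝ) (hab : a ≤ b) (hM : 0 < M) (h : ℝ → ℝ)
    (hdiff : DifferentiableOn ℝ h (Set.Icc a b))
    (hbound : ∀ x ∈ Set.Icc a b, |derivWithin h (Set.Icc a b) x| ≤ M)
    (hb : 0 < h b) :
    ∀ x ∈ Set.Ioc (max a (b - h b / M)) b, 0 < h x := by
  intro x hx
  obtain ⟨hx1, hx2⟩ := hx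
  rw [max_lt_iff] at hx1
  obtain ⟨hxa, hxb⟩ := hx1
  have hxmem : x ∈ Set.Icc a b := ⟨hxa.le, hx2⟩
  have hbmem : b ∈ Set.Icc a b := ⟨hab, le_refl b⟩
  have key := (convex_Icc a b).norm_image_sub_le_of_norm_derivWithin_le
    hdiff (fun y hy => by simpa [Real.norm_eq_abs] using hbound y hy) hbmem hxmem
  rw [Real.norm_eq_abs, Real.norm_eq_abs] at key
  have hlt : M * |x - b| < h b := by
    rw [abs_sub_comm, abs_of_nonneg (by linarith)]
    calc M * (b - x) < M * (h b / M) := by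
          apply mul_lt_mul_of_pos_left _ hM; linarith
      _ = h b := by field_simp
  have := abs_sub_lt_iff.mp (lt_of_le_of_lt key hlt)
  linarith [this.2]
end

section
/- For every integer k ≥ 1, the number d_k := (−1)^k·(3/4) − (−1)^k·log 2 + (−1)^{k+1}·∑_{j=1}^k (1 − 1/2^{2j})·B_{2j}/(2j) is strictly positive, where B_{2j} denotes the 2j-th Bernoulli number. -/
open Real Finset

noncomputable def uaux (j : ℕ) : ℝ :=
  (-1 : ℝ) ^ (j + 1) *
    ((1 - 1 / (2 : ℝ) ^ (2 * j)) * ((bernoulli (2 * j) : ℚ) : ℝ) / (2 * (j : ℝ)))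

lemma negonesq (n : ℕ) : ((-1 : ℝ) ^ n) ^ 2 = 1 := by
  rcases Nat.even_or_odd n with h | h
  · rw [h.neg_one_pow]; norm_num
  · rw [h.neg_one_pow]; norm_num

lemma uaux_repr (j : ℕ) (hj : 1 ≤ j) :
    ∃ Z : ℝ, 1 ≤ Z ∧ Z ≤ π ^ 2 / 6 ∧
      uaux j = (1 - 1 / (2 : ℝ) ^ (2 * j)) * 2 * Z * (Nat.factorial (2 * j - 1) : ℝ) / (2 * π) ^ (2 * j) := by
  have hj0 : j ≠ 0 := by omega
  have hs := hasSum_zeta_nat hj0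
  set Z : ℝ := (-1 : ℝ) ^ (j + 1) * 2 ^ (2 * j - 1) * π ^ (2 * j) *
      ((bernoulli (2 * j) : ℚ) : ℝ) / (Nat.factorial (2 * j)) with hZ
  refine ⟨Z, ?_, ?_, ?_⟩
  · have := le_hasSum hs 1 (fun i _ => by positivity)
    simpa using this
  · refine hasSum_le (fun n => ?_) hs hasSum_zeta_two
    rcases Nat.eq_zero_or_pos n with h | h
    · subst h
      rw [Nat.cast_zero, zero_pow (by omega : 2 * j ≠ 0)]
      norm_num
    · have h1 : (1 : ℝ) ≤ (n : ℝ) := by exact_mod_cast h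
      have h2 : (n : ℝ) ^ 2 ≤ (n : ℝ) ^ (2 * j) := pow_le_pow_right₀ h1 (by omega)
      exact div_le_div_of_nonneg_left one_pos.le (by positivity) h2
  · have hsk : 2 * j = (2 * j - 1) + 1 := by omega
    have hfac : (Nat.factorial (2 * j) : ℝ) = (2 * j : ℕ) * (Nat.factorial (2 * j - 1) : ℝ) := by
      rw [hsk, Nat.factorial_succ]
      push_cast
      ring
    have hpow : (2 : ℝ) ^ (2 * j) = 2 * 2 ^ (2 * j - 1) := by
      conv_lhs => rw [hsk, pow_succ]
      ring
    have hcase : (-1:ℝ)^(j+1) = 1 ∨ (-1:ℝ)^(j+1) = -1 := by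
      rcases Nat.even_or_odd (j+1) with h | h
      · exact Or.inl h.neg_one_pow
      · exact Or.inr h.neg_one_pow
    have hp : (0:ℝ) < π ^ (2 * j) := pow_pos pi_pos _
    have h2p : (0:ℝ) < (2:ℝ) ^ (2 * j - 1) := by positivity
    have hjp : (0:ℝ) < (j : ℝ) := by exact_mod_cast hj
    have hf1 : (0:ℝ) < (Nat.factorial (2 * j - 1) : ℝ) := by
      exact_mod_cast Nat.factorial_pos _
    rw [uaux, hZ, mul_pow, hfac, hpow]
    push_cast
    rcases hcase with h | h <;> rw [h] <;> field_simp <;> ring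

lemma aux_facts (j : ℕ) (hj : 1 ≤ j) :
    (0:ℝ) < (2*π)^(2*j) ∧ (0:ℝ) < (Nat.factorial (2*j-1) : ℝ) ∧
    (0:ℝ) < 1 - 1/(2:ℝ)^(2*j) ∧ 1 - 1/(2:ℝ)^(2*j) ≤ 1 := by
  have h1 : (1:ℝ) < (2:ℝ)^(2*j) := one_lt_pow₀ one_lt_two (by omega)
  refine ⟨by positivity, by exact_mod_cast Nat.factorial_pos _, ?_, ?_⟩
  · have : 1/(2:ℝ)^(2*j) < 1 := by
      rw [div_lt_one (by positivity)]; exact h1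
    linarith
  · have : (0:ℝ) < 1/(2:ℝ)^(2*j) := by positivity
    linarith

lemma uaux_nonneg (j : ℕ) (hj : 1 ≤ j) : 0 ≤ uaux j := by
  obtain ⟨Z, hZ1, _, hZe⟩ := uaux_repr j hj
  obtain ⟨h1, h2, h3, _⟩ := aux_facts j hj
  rw [hZe]
  have : (0:ℝ) < Z := lt_of_lt_of_le one_pos hZ1
  positivity

lemma uaux_ub (j : ℕ) (hj : 1 ≤ j) :
    uaux j ≤ (π^2/3) * (Nat.factorial (2*j-1) : ℝ) / (2*π)^(2*j) := by
  obtain ⟨Z, hZ1, hZ2, hZe⟩ := uaux_repr j hj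
  obtain ⟨h1, h2, h3, h4⟩ := aux_facts j hj
  rw [hZe]
  rw [div_le_div_iff_of_pos_right h1]
  have hZ0 : (0:ℝ) < Z := lt_of_lt_of_le one_pos hZ1
  have e1 : (1 - 1/(2:ℝ)^(2*j)) * (2*Z*(Nat.factorial (2*j-1) : ℝ)) ≤
      1 * (2*Z*(Nat.factorial (2*j-1) : ℝ)) :=
    mul_le_mul_of_nonneg_right h4 (by positivity)
  have e2 : 2*Z*(Nat.factorial (2*j-1) : ℝ) ≤ 2*(π^2/6)*(Nat.factorial (2*j-1) : ℝ) := by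
    nlinarith [mul_le_mul_of_nonneg_right hZ2 h2.le]
  nlinarith [e1, e2]

lemma uaux_lb (j : ℕ) (hj : 4 ≤ j) :
    (255/128) * (Nat.factorial (2*j-1) : ℝ) / (2*π)^(2*j) ≤ uaux j := by
  have hj1 : 1 ≤ j := by omega
  obtain ⟨Z, hZ1, hZ2, hZe⟩ := uaux_repr j hj1
  obtain ⟨h1, h2, h3, h4⟩ := aux_facts j hj1
  have h5 : (255/256 : ℝ) ≤ 1 - 1/(2:ℝ)^(2*j) := by
    have : (2:ℝ)^8 ≤ (2:ℝ)^(2*j) := pow_le_pow_right₀ one_le_two (by omega)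
    have h6 : 1/(2:ℝ)^(2*j) ≤ 1/(2:ℝ)^8 := by
      apply div_le_div_of_nonneg_left one_pos.le (by positivity) this
    norm_num at h6 ⊢
    linarith
  rw [hZe, div_le_div_iff_of_pos_right h1]
  have e3 : (255/256:ℝ)*1 ≤ (1 - 1/(2:ℝ)^(2*j))*Z :=
    mul_le_mul h5 hZ1 one_pos.le h3.le
  nlinarith [mul_le_mul_of_nonneg_right e3 h2.le]

lemma bo5 : bernoulli' 5 = 0 := bernoulli'_eq_zero_of_odd (by decide) (by norm_num)
lemma bo7 : bernoulli' 7 = 0 := bernoulli'_eq_zero_of_odd (by decide) (by norm_num)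
lemma bo9 : bernoulli' 9 = 0 := bernoulli'_eq_zero_of_odd (by decide) (by norm_num)
lemma bo11 : bernoulli' 11 = 0 := bernoulli'_eq_zero_of_odd (by decide) (by norm_num)
lemma bo13 : bernoulli' 13 = 0 := bernoulli'_eq_zero_of_odd (by decide) (by norm_num)

lemma bp6 : bernoulli' 6 = 1/42 := by
  rw [bernoulli'_def]; norm_num [sum_range_succ, bo5, Nat.choose]
lemma bp8 : bernoulli' 8 = -1/30 := by
  rw [bernoulli'_def]; norm_num [sum_range_succ, bo5, bo7, bp6, Nat.choose]
lemma bp10 : bernoulli' 10 = 5/66 := by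
  rw [bernoulli'_def]; norm_num [sum_range_succ, bo5, bo7, bo9, bp6, bp8, Nat.choose]
lemma bp12 : bernoulli' 12 = -691/2730 := by
  rw [bernoulli'_def]; norm_num [sum_range_succ, bo5, bo7, bo9, bo11, bp6, bp8, bp10, Nat.choose]
lemma bp14 : bernoulli' 14 = 7/6 := by
  rw [bernoulli'_def]; norm_num [sum_range_succ, bo5, bo7, bo9, bo11, bo13, bp6, bp8, bp10, bp12, Nat.choose]

lemma be2 : bernoulli 2 = 1/6 := by
  rw [bernoulli_eq_bernoulli'_of_ne_one (by norm_num), bernoulli'_two]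
lemma be4 : bernoulli 4 = -1/30 := by
  rw [bernoulli_eq_bernoulli'_of_ne_one (by norm_num), bernoulli'_four]
lemma be6 : bernoulli 6 = 1/42 := by
  rw [bernoulli_eq_bernoulli'_of_ne_one (by norm_num), bp6]
lemma be8 : bernoulli 8 = -1/30 := by
  rw [bernoulli_eq_bernoulli'_of_ne_one (by norm_num), bp8]
lemma be10 : bernoulli 10 = 5/66 := by
  rw [bernoulli_eq_bernoulli'_of_ne_one (by norm_num), bp10]
lemma be12 : bernoulli 12 = -691/2730 := by
  rw [bernoulli_eq_bernoulli'_of_ne_one (by norm_num), bp12]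
lemma be14 : bernoulli 14 = 7/6 := by
  rw [bernoulli_eq_bernoulli'_of_ne_one (by norm_num), bp14]

lemma uaux1 : uaux 1 = 1/16 := by norm_num [uaux, be2]
lemma uaux2 : uaux 2 = 1/128 := by norm_num [uaux, be4]
lemma uaux3 : uaux 3 = 1/256 := by norm_num [uaux, be6]
lemma uaux4 : uaux 4 = 17/4096 := by norm_num [uaux, be8]
lemma uaux5 : uaux 5 = 341/45056 := by norm_num [uaux, be10]
lemma uaux6 : uaux 6 = 691/32768 := by norm_num [uaux, be12]
lemma uaux7 : uaux 7 = 5461/65536 := by norm_num [uaux, be14]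

lemma sum_uaux7 : ∑ j ∈ Icc 1 7, uaux j =
    1/16 + 1/128 + 1/256 + 17/4096 + 341/45056 + 691/32768 + 5461/65536 := by
  rw [show Finset.Icc 1 7 = ({1,2,3,4,5,6,7} : Finset ℕ) from rfl]
  rw [show ({1,2,3,4,5,6,7} : Finset ℕ).sum uaux =
    uaux 1 + (uaux 2 + (uaux 3 + (uaux 4 + (uaux 5 + (uaux 6 + uaux 7))))) from by
      simp [Finset.sum_insert, Finset.mem_insert]]
  rw [uaux1, uaux2, uaux3, uaux4, uaux5, uaux6, uaux7]
  ring

lemma uaux_double (k : ℕ) (hk : 8 ≤ k) : 2 * uaux k ≤ uaux (k + 1) := by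
  set F : ℝ := (Nat.factorial (2*k-1) : ℝ) with hF
  set D : ℝ := (2*π)^(2*k) with hD
  have hk8 : (8:ℝ) ≤ (k:ℝ) := by exact_mod_cast hk
  have hπ2 : π^2 < 9.87 := by nlinarith [pi_lt_d6, pi_gt_three]
  have hπ4 : π^4 < 97.42 := by nlinarith [hπ2, pi_gt_three]
  have hDpos : (0:ℝ) < D := by positivity
  have hFpos : (0:ℝ) < F := by
    rw [hF]
    exact_mod_cast Nat.factorial_pos _
  have hn2 : (2*k-1) + 1 = 2*k := by omega
  have hc : ((2*k-1 : ℕ):ℝ) = 2*(k:ℝ) - 1 := by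
    have := congrArg (Nat.cast : ℕ → ℝ) hn2
    push_cast at this
    linarith
  have hF' : (Nat.factorial (2*(k+1)-1) : ℝ) = (2*(k:ℝ)+1) * (2*(k:ℝ)) * F := by
    have hn : 2*(k+1)-1 = ((2*k-1)+1)+1 := by omega
    rw [hn, Nat.factorial_succ, Nat.factorial_succ]
    push_cast
    rw [hc]
    ring
  have hpow : (2*π)^(2*(k+1)) = D * (2*π)^2 := by
    rw [hD, ← pow_add, show 2*k+2 = 2*(k+1) from by ring]
  have hcoef : 2*(π^2/3)*(2*π)^2 ≤ (255/128)*((2*(k:ℝ)+1)*(2*(k:ℝ))) := by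
    nlinarith [hπ4, hk8, sq_nonneg ((k:ℝ) - 8)]
  have hub := uaux_ub k (by omega)
  have hlb := uaux_lb (k+1) (by omega)
  calc 2 * uaux k ≤ 2*((π^2/3) * F / D) := by linarith
    _ = (2*(π^2/3)*(2*π)^2) * F / (D*(2*π)^2) := by
        field_simp
    _ ≤ ((255/128)*((2*(k:ℝ)+1)*(2*(k:ℝ)))) * F / (D*(2*π)^2) := by
        gcongr
    _ = (255/128) * ((Nat.factorial (2*(k+1)-1) : ℝ)) / ((2*π)^(2*(k+1))) := by
        rw [hF', hpow]
        ring
    _ ≤ uaux (k+1) := hlb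

lemma base8 : (3/4 - Real.log 2) + ∑ j ∈ Icc 1 7, uaux j < uaux 8 := by
  have hlb := uaux_lb 8 (by norm_num)
  have hfac : (Nat.factorial (2*8-1) : ℝ) = 1307674368000 := by norm_num [Nat.factorial]
  have hpow : (2*π)^(2*8) ≤ (6.283186:ℝ)^16 := by
    apply pow_le_pow_left₀ (by positivity)
    nlinarith [pi_lt_d6]
  have hq : (255/128) * (1307674368000:ℝ) / (6.283186:ℝ)^16 ≤
      (255/128) * (Nat.factorial (2*8-1) : ℝ) / (2*π)^(2*8) := by
    rw [hfac]
    apply div_le_div_of_nonneg_left (by norm_num) (by positivity) hpow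
  have hlog := Real.log_two_gt_d9
  rw [sum_uaux7]
  have : (3/4 - Real.log 2) + (1/16 + 1/128 + 1/256 + 17/4096 + 341/45056 + 691/32768 + 5461/65536)
      < (255/128) * (1307674368000:ℝ) / (6.283186:ℝ)^16 := by
    norm_num
    nlinarith [hlog]
  linarith

lemma growth (k : ℕ) (hk : 8 ≤ k) :
    (3/4 - Real.log 2) + ∑ j ∈ Icc 1 (k-1), uaux j < uaux k := by
  induction k, hk using Nat.le_induction with
  | base => exact base8
  | succ n hn ih =>
      rw [show n+1-1 = n from rfl]
      obtain ⟨m, rfl⟩ : ∃ m, n = m+1 := ⟨n-1, by omega⟩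
      rw [Finset.sum_Icc_succ_top (by omega)]
      have hd := uaux_double (m+1) hn
      have ih' : (3/4 - Real.log 2) + ∑ j ∈ Icc 1 m, uaux j < uaux (m+1) := by
        simpa using ih
      linarith

lemma expr_eq (k : ℕ) :
    (-1 : ℝ) ^ k * (3 / 4) - (-1 : ℝ) ^ k * Real.log 2 +
      (-1 : ℝ) ^ (k + 1) *
        ∑ j ∈ Finset.Icc 1 k,
          (1 - 1 / (2 : ℝ) ^ (2 * j)) * ((bernoulli (2 * j) : ℚ) : ℝ) / (2 * (j : ℝ)) =
    (-1 : ℝ) ^ k * (3 / 4) - (-1 : ℝ) ^ k * Real.log 2 +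
      ∑ j ∈ Finset.Icc 1 k, (-1 : ℝ) ^ (k + j) * uaux j := by
  rw [Finset.mul_sum]
  congr 1
  apply Finset.sum_congr rfl
  intro j _
  have hterm : (1 - 1 / (2 : ℝ) ^ (2 * j)) * ((bernoulli (2 * j) : ℚ) : ℝ) / (2 * (j : ℝ)) =
      (-1 : ℝ) ^ (j + 1) * uaux j := by
    rw [uaux, ← mul_assoc, ← sq, negonesq, one_mul]
  rw [hterm, ← mul_assoc, ← pow_add, show (k+1)+(j+1) = (k+j)+2 from by ring, pow_add]
  norm_num

/-- For every `k ≥ 1`, the Taylor coefficient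
`d_k = (-1)^k (3/4) - (-1)^k log 2 + (-1)^{k+1} ∑_{j=1}^k (1 - 1/2^{2j}) B_{2j}/(2j)`
is strictly positive. -/
theorem stmt_9 (k : ℕ) (hk : 1 ≤ k) :
    0 < (-1 : ℝ) ^ k * (3 / 4) - (-1 : ℝ) ^ k * Real.log 2 +
      (-1 : ℝ) ^ (k + 1) *
        ∑ j ∈ Finset.Icc 1 k,
          (1 - 1 / (2 : ℝ) ^ (2 * j)) * ((bernoulli (2 * j) : ℚ) : ℝ) / (2 * (j : ℝ)) := by
  rw [expr_eq]
  have hlog1 := Real.log_two_gt_d9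
  have hlog2 := Real.log_two_lt_d9
  rcases lt_or_ge k 8 with hsmall | hbig
  · interval_cases k <;>
    · simp only [show Finset.Icc 1 1 = ({1}:Finset ℕ) from rfl,
        show Finset.Icc 1 2 = ({1,2}:Finset ℕ) from rfl,
        show Finset.Icc 1 3 = ({1,2,3}:Finset ℕ) from rfl,
        show Finset.Icc 1 4 = ({1,2,3,4}:Finset ℕ) from rfl,
        show Finset.Icc 1 5 = ({1,2,3,4,5}:Finset ℕ) from rfl,
        show Finset.Icc 1 6 = ({1,2,3,4,5,6}:Finset ℕ) from rfl,
        show Finset.Icc 1 7 = ({1,2,3,4,5,6,7}:Finset ℕ) from rfl]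
      norm_num [Finset.sum_insert, Finset.mem_insert, Finset.sum_singleton,
        uaux1, uaux2, uaux3, uaux4, uaux5, uaux6, uaux7]
      linarith
  · obtain ⟨m, rfl⟩ : ∃ m, k = m + 1 := ⟨k-1, by omega⟩
    rw [Finset.sum_Icc_succ_top (by omega)]
    have hkk : (-1:ℝ)^((m+1)+(m+1)) = 1 := Even.neg_one_pow ⟨m+1, by ring⟩
    have h1 : ∀ j ∈ Icc 1 m, -(uaux j) ≤ (-1:ℝ)^((m+1)+j) * uaux j := by
      intro j hj
      have hu := uaux_nonneg j (Finset.mem_Icc.1 hj).1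
      rcases Nat.even_or_odd ((m+1)+j) with h | h
      · rw [h.neg_one_pow, one_mul]; linarith
      · rw [h.neg_one_pow, neg_one_mul]
    have hsum : -∑ j ∈ Icc 1 m, uaux j ≤ ∑ j ∈ Icc 1 m, (-1:ℝ)^((m+1)+j) * uaux j := by
      rw [← Finset.sum_neg_distrib]
      exact Finset.sum_le_sum h1
    have hg := growth (m+1) hbig
    have hg' : (3/4 - Real.log 2) + ∑ j ∈ Icc 1 m, uaux j < uaux (m+1) := by
      simpa using hg
    have hL : 0 < 3/4 - Real.log 2 := by linarith
    have hhead : -(3/4 - Real.log 2) ≤ (-1:ℝ)^(m+1) * (3/4) - (-1:ℝ)^(m+1) * Real.log 2 := by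
      rcases Nat.even_or_odd (m+1) with h | h
      · rw [h.neg_one_pow]; linarith
      · rw [h.neg_one_pow]; linarith
    rw [hkk, one_mul]
    linarith
end

section
/- Let F and G be measurable nonnegative real functions on ℝ that are periodic with period 2π and even, with F non-decreasing on (0, π) and G non-increasing on (0, π). Let T : (0, 2π] → (0, 2π] be a Borel measurable map that preserves Lebesgue measure, i.e. for every Borel set B ⊆ (0, 2π], the Lebesgue measure of T^{-1}(B) equals that of B. Then ∫_0^{2π} F(t)·G(t) dt ≤ ∫_0^{2π} F(t)·G(T(t)) dt. -/
open Real MeasureTheory Set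
open scoped ENNReal

namespace Stmt11

/-- Upper set × lower set inside `(0, π)` intersect in measure at most
`|S| + |B| - π`. -/
lemma upper_lower (S B : Set ℝ)
    (hSsub : S ⊆ Ioo 0 π) (hBsub : B ⊆ Ioo 0 π)
    (hSup : ∀ t ∈ S, ∀ t' ∈ Ioo 0 π, t ≤ t' → t' ∈ S)
    (hBlow : ∀ t ∈ B, ∀ t' ∈ Ioo 0 π, t' ≤ t → t' ∈ B) :
    volume (S ∩ B) ≤
      ENNReal.ofReal ((volume S).toReal + (volume B).toReal - π) := by
  set α := (volume S).toReal with hα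
  set β := (volume B).toReal with hβ
  have hSfin : volume S ≠ ⊤ :=
    ne_top_of_le_ne_top (by simp [Real.volume_Ioo]) (measure_mono hSsub)
  have hBfin : volume B ≠ ⊤ :=
    ne_top_of_le_ne_top (by simp [Real.volume_Ioo]) (measure_mono hBsub)
  have hSIci : S ⊆ Ici (π - α) := by
    intro t ht
    simp only [mem_Ici]
    by_contra hlt
    push_neg at hlt
    have h1 : Ioo t π ⊆ S := fun t' ht' =>
      hSup t ht t' ⟨lt_trans (hSsub ht).1 ht'.1, ht'.2⟩ ht'.1.le
    have h2 : ENNReal.ofReal (π - t) ≤ volume S := by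
      rw [← Real.volume_Ioo]; exact measure_mono h1
    have h3 : π - t ≤ α := by
      have := ENNReal.toReal_mono hSfin h2
      rwa [ENNReal.toReal_ofReal (by linarith [(hSsub ht).2] : (0:ℝ) ≤ π - t)] at this
    linarith
  have hBIic : B ⊆ Iic β := by
    intro t ht
    simp only [mem_Iic]
    by_contra hlt
    push_neg at hlt
    have h1 : Ioo 0 t ⊆ B := fun t' ht' =>
      hBlow t ht t' ⟨ht'.1, lt_trans ht'.2 (hBsub ht).2⟩ ht'.2.le
    have h2 : ENNReal.ofReal t ≤ volume B := by
      rw [← sub_zero t, ← Real.volume_Ioo]; exact measure_mono h1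
    have h3 : t ≤ β := by
      have := ENNReal.toReal_mono hBfin h2
      rwa [ENNReal.toReal_ofReal (by linarith [(hBsub ht).1] : (0:ℝ) ≤ t)] at this
    linarith
  have hsub : S ∩ B ⊆ Icc (π - α) β := fun t ht => ⟨hSIci ht.1, hBIic ht.2⟩
  calc volume (S ∩ B) ≤ volume (Icc (π - α) β) := measure_mono hsub
    _ = ENNReal.ofReal (β - (π - α)) := Real.volume_Icc
    _ = ENNReal.ofReal (α + β - π) := by ring_nf

/-- Decomposition of `X ∩ (0, 2π]` into the two open halves. -/
lemma decomp (X : Set ℝ) (hX : MeasurableSet X) :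
    volume (X ∩ Ioc 0 (2 * π)) =
      volume (X ∩ Ioo 0 π) + volume (X ∩ Ioo π (2 * π)) := by
  have hdisj : Disjoint (X ∩ Ioo 0 π) (X ∩ Ioo π (2 * π)) := by
    refine Set.disjoint_left.2 ?_
    rintro t ⟨-, h1⟩ ⟨-, h2⟩
    exact lt_irrefl t (h1.2.trans h2.1)
  have hmeas : MeasurableSet (X ∩ Ioo π (2 * π)) := hX.inter measurableSet_Ioo
  have h1 : volume (X ∩ Ioc 0 (2 * π)) =
      volume ((X ∩ Ioo 0 π) ∪ (X ∩ Ioo π (2 * π))) := by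
    refine le_antisymm ?_ (measure_mono ?_)
    · have hsub : X ∩ Ioc 0 (2 * π) ⊆
          ((X ∩ Ioo 0 π) ∪ (X ∩ Ioo π (2 * π))) ∪ ({π, 2 * π} : Set ℝ) := by
        rintro t ⟨htX, ht0, ht2⟩
        rcases lt_trichotomy t π with h | h | h
        · exact Or.inl (Or.inl ⟨htX, ht0, h⟩)
        · exact Or.inr (Or.inl h)
        · rcases lt_or_eq_of_le ht2 with h2 | h2
          · exact Or.inl (Or.inr ⟨htX, h, h2⟩)
          · exact Or.inr (Or.inr h2)
      calc volume (X ∩ Ioc 0 (2 * π))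
          ≤ volume (((X ∩ Ioo 0 π) ∪ (X ∩ Ioo π (2 * π))) ∪ ({π, 2 * π} : Set ℝ)) :=
            measure_mono hsub
        _ ≤ volume ((X ∩ Ioo 0 π) ∪ (X ∩ Ioo π (2 * π))) + volume ({π, 2 * π} : Set ℝ) :=
            measure_union_le _ _
        _ = volume ((X ∩ Ioo 0 π) ∪ (X ∩ Ioo π (2 * π))) := by
            have h0 : volume ({π, 2 * π} : Set ℝ) = 0 :=
              Set.Countable.measure_zero (Set.to_countable _) volume
            rw [h0, add_zero]
    · have hπ : (0:ℝ) < π := Real.pi_pos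
      refine Set.union_subset ?_ ?_
      · rintro t ⟨htX, h1, h2⟩; exact ⟨htX, h1, by linarith⟩
      · rintro t ⟨htX, h1, h2⟩; exact ⟨htX, by linarith, h2.le⟩
  rw [h1, measure_union hdisj hmeas]

/-- Key measure comparison for the level sets of `F` and `G`. -/
lemma key (F G : ℝ → ℝ) (hFmeas : Measurable F) (hGmeas : Measurable G)
    (hFper : Function.Periodic F (2 * π)) (hGper : Function.Periodic G (2 * π))
    (hFeven : ∀ x, F (-x) = F x) (hGeven : ∀ x, G (-x) = G x)
    (hFmono : MonotoneOn F (Ioo 0 π)) (hGanti : AntitoneOn G (Ioo 0 π))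
    (s u : ℝ) :
    volume ({t | s < F t} ∩ ({t | u < G t} ∩ Ioc 0 (2 * π))) ≤
      (volume ({t | s < F t} ∩ Ioc 0 (2 * π)) +
        volume ({t | u < G t} ∩ Ioc 0 (2 * π))) - ENNReal.ofReal (2 * π) := by
  have hπ : (0:ℝ) < π := Real.pi_pos
  set A := {t : ℝ | s < F t} with hAdef
  set B := {t : ℝ | u < G t} with hBdef
  have hA : MeasurableSet A := measurableSet_lt measurable_const hFmeas
  have hB : MeasurableSet B := measurableSet_lt measurable_const hGmeas
  have hFrefl : ∀ t, F (2 * π - t) = F t := by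
    intro t
    rw [show 2 * π - t = -t + 2 * π by ring, hFper (-t), hFeven]
  have hGrefl : ∀ t, G (2 * π - t) = G t := by
    intro t
    rw [show 2 * π - t = -t + 2 * π by ring, hGper (-t), hGeven]
  have hrefl_vol : ∀ X : Set ℝ, MeasurableSet X →
      volume ((fun t => 2 * π - t) ⁻¹' X) = volume X := fun X hX =>
    (Measure.measurePreserving_sub_left volume (2 * π)).measure_preimage
      hX.nullMeasurableSet
  -- reflections of the three sets
  have hreflA : volume (A ∩ Ioo π (2 * π)) = volume (A ∩ Ioo 0 π) := by
    rw [← hrefl_vol (A ∩ Ioo 0 π) (hA.inter measurableSet_Ioo)]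
    congr 1
    ext t
    simp only [mem_preimage, mem_inter_iff, hAdef, mem_setOf_eq, mem_Ioo, hFrefl t]
    constructor <;> rintro ⟨h1, h2, h3⟩ <;> exact ⟨h1, by linarith, by linarith⟩
  have hreflB : volume (B ∩ Ioo π (2 * π)) = volume (B ∩ Ioo 0 π) := by
    rw [← hrefl_vol (B ∩ Ioo 0 π) (hB.inter measurableSet_Ioo)]
    congr 1
    ext t
    simp only [mem_preimage, mem_inter_iff, hBdef, mem_setOf_eq, mem_Ioo, hGrefl t]
    constructor <;> rintro ⟨h1, h2, h3⟩ <;> exact ⟨h1, by linarith, by linarith⟩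
  have hreflAB : volume ((A ∩ B) ∩ Ioo π (2 * π)) = volume ((A ∩ B) ∩ Ioo 0 π) := by
    rw [← hrefl_vol ((A ∩ B) ∩ Ioo 0 π) ((hA.inter hB).inter measurableSet_Ioo)]
    congr 1
    ext t
    simp only [mem_preimage, mem_inter_iff, hAdef, hBdef, mem_setOf_eq, mem_Ioo,
      hFrefl t, hGrefl t]
    constructor <;> rintro ⟨⟨h1, h1'⟩, h2, h3⟩ <;>
      exact ⟨⟨h1, h1'⟩, by linarith, by linarith⟩
  -- the structural estimate on (0, π)
  set α := (volume (A ∩ Ioo 0 π)).toReal with hαdef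
  set β := (volume (B ∩ Ioo 0 π)).toReal with hβdef
  have hSfin : volume (A ∩ Ioo 0 π) ≠ ⊤ :=
    ne_top_of_le_ne_top (by simp [Real.volume_Ioo]) (measure_mono inter_subset_right)
  have hBfin : volume (B ∩ Ioo 0 π) ≠ ⊤ :=
    ne_top_of_le_ne_top (by simp [Real.volume_Ioo]) (measure_mono inter_subset_right)
  have hvolS : volume (A ∩ Ioo 0 π) = ENNReal.ofReal α := (ENNReal.ofReal_toReal hSfin).symm
  have hvolB : volume (B ∩ Ioo 0 π) = ENNReal.ofReal β := (ENNReal.ofReal_toReal hBfin).symm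
  have hUL : volume ((A ∩ B) ∩ Ioo 0 π) ≤ ENNReal.ofReal (α + β - π) := by
    have hset : (A ∩ B) ∩ Ioo 0 π = (A ∩ Ioo 0 π) ∩ (B ∩ Ioo 0 π) := by
      ext t; simp only [mem_inter_iff]; tauto
    rw [hset]
    exact upper_lower (A ∩ Ioo 0 π) (B ∩ Ioo 0 π) inter_subset_right inter_subset_right
      (by
        rintro t ⟨htA, htI⟩ t' ht'I hle
        exact ⟨lt_of_lt_of_le htA (hFmono htI ht'I hle), ht'I⟩)
      (by
        rintro t ⟨htB, htI⟩ t' ht'I hle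
        exact ⟨lt_of_lt_of_le htB (hGanti ht'I htI hle), ht'I⟩)
  -- assemble
  have hLHS : volume (A ∩ (B ∩ Ioc 0 (2 * π))) ≤
      ENNReal.ofReal (α + β - π) + ENNReal.ofReal (α + β - π) := by
    have hassoc : A ∩ (B ∩ Ioc 0 (2 * π)) = (A ∩ B) ∩ Ioc 0 (2 * π) := by
      rw [inter_assoc]
    rw [hassoc, decomp (A ∩ B) (hA.inter hB), hreflAB]
    exact add_le_add hUL hUL
  have hvolA2 : volume (A ∩ Ioc 0 (2 * π)) = ENNReal.ofReal α + ENNReal.ofReal α := by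
    rw [decomp A hA, hreflA, hvolS]
  have hvolB2 : volume (B ∩ Ioc 0 (2 * π)) = ENNReal.ofReal β + ENNReal.ofReal β := by
    rw [decomp B hB, hreflB, hvolB]
  refine le_trans hLHS ?_
  rw [hvolA2, hvolB2]
  have hα0 : 0 ≤ α := ENNReal.toReal_nonneg
  have hβ0 : 0 ≤ β := ENNReal.toReal_nonneg
  have hRHS : (ENNReal.ofReal α + ENNReal.ofReal α + (ENNReal.ofReal β + ENNReal.ofReal β))
      - ENNReal.ofReal (2 * π) = ENNReal.ofReal (2 * α + 2 * β - 2 * π) := by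
    rw [← ENNReal.ofReal_add hα0 hα0, ← ENNReal.ofReal_add hβ0 hβ0,
      ← ENNReal.ofReal_add (by linarith) (by linarith),
      ← ENNReal.ofReal_sub _ (by linarith : (0:ℝ) ≤ 2 * π)]
    ring_nf
  rw [hRHS]
  rcases le_or_gt (α + β - π) 0 with hx | hx
  · rw [ENNReal.ofReal_of_nonpos hx]; simp
  · rw [← ENNReal.ofReal_add hx.le hx.le]
    exact ENNReal.ofReal_le_ofReal (by linarith)

/-- Layer cake formula for the product. -/
lemma layercake (F H : ℝ → ℝ) (hF : Measurable F) (hH : Measurable H)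
    (hF0 : ∀ x, 0 ≤ F x) :
    ∫⁻ t in Ioc 0 (2 * π), ENNReal.ofReal (F t * H t) =
      ∫⁻ u in Ioi (0 : ℝ), ∫⁻ s in Ioi (0 : ℝ),
        volume ({t | s < F t} ∩ ({t | u < H t} ∩ Ioc 0 (2 * π))) := by
  have step1 : ∀ t : ℝ, ENNReal.ofReal (F t * H t)
      = ∫⁻ u in Ioi (0:ℝ), ENNReal.ofReal (F t) *
          (Iio (H t)).indicator (fun _ => (1:ℝ≥0∞)) u := by
    intro t
    rw [lintegral_const_mul' _ _ ENNReal.ofReal_ne_top,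
      lintegral_indicator measurableSet_Iio, setLIntegral_one,
      Measure.restrict_apply measurableSet_Iio, Set.Iio_inter_Ioi,
      Real.volume_Ioo, sub_zero, ← ENNReal.ofReal_mul (hF0 t)]
  have hW : MeasurableSet {p : ℝ × ℝ | p.2 < H p.1} :=
    measurableSet_lt measurable_snd (hH.comp measurable_fst)
  have hmeas : Measurable (Function.uncurry fun t u =>
      ENNReal.ofReal (F t) * (Iio (H t)).indicator (fun _ => (1:ℝ≥0∞)) u) := by
    have heq : (Function.uncurry fun t u =>
        ENNReal.ofReal (F t) * (Iio (H t)).indicator (fun _ => (1:ℝ≥0∞)) u)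
        = fun p : ℝ × ℝ => ENNReal.ofReal (F p.1) *
            ({p : ℝ × ℝ | p.2 < H p.1}.indicator (fun _ => (1:ℝ≥0∞)) p) := by
      funext p
      rcases p with ⟨t, v⟩
      simp only [Function.uncurry, Set.indicator_apply, mem_Iio, mem_setOf_eq]
    rw [heq]
    exact (ENNReal.measurable_ofReal.comp (hF.comp measurable_fst)).mul
      (measurable_const.indicator hW)
  calc ∫⁻ t in Ioc 0 (2 * π), ENNReal.ofReal (F t * H t)
      = ∫⁻ t in Ioc 0 (2 * π), ∫⁻ u in Ioi (0:ℝ),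
          ENNReal.ofReal (F t) * (Iio (H t)).indicator (fun _ => (1:ℝ≥0∞)) u :=
        lintegral_congr fun t => step1 t
    _ = ∫⁻ u in Ioi (0:ℝ), ∫⁻ t in Ioc 0 (2 * π),
          ENNReal.ofReal (F t) * (Iio (H t)).indicator (fun _ => (1:ℝ≥0∞)) u :=
        lintegral_lintegral_swap hmeas.aemeasurable
    _ = ∫⁻ u in Ioi (0:ℝ), ∫⁻ s in Ioi (0 : ℝ),
          volume ({t | s < F t} ∩ ({t | u < H t} ∩ Ioc 0 (2 * π))) := by
        refine lintegral_congr fun u => ?_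
        have hBu : MeasurableSet {t : ℝ | u < H t} := measurableSet_lt measurable_const hH
        have e1 : (fun t => ENNReal.ofReal (F t) *
            (Iio (H t)).indicator (fun _ => (1:ℝ≥0∞)) u)
            = {t : ℝ | u < H t}.indicator fun t => ENNReal.ofReal (F t) := by
          funext t
          by_cases h : u < H t
          · simp [Set.indicator_apply, h]
          · simp [Set.indicator_apply, h]
        rw [e1, lintegral_indicator hBu, Measure.restrict_restrict hBu,
          lintegral_eq_lintegral_meas_lt _ (ae_of_all _ hF0) hF.aemeasurable]
        refine lintegral_congr fun s => ?_
        rw [Measure.restrict_apply (measurableSet_lt measurable_const hF)]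

end Stmt11

/-- Rearrangement proposition: if `F, G ≥ 0` are measurable, `2π`-periodic and even,
`F` non-decreasing and `G` non-increasing on `(0, π)`, and `T` is a Borel measurable
map of `(0, 2π]` into itself preserving Lebesgue measure, then
`∫_0^{2π} F G ≤ ∫_0^{2π} F (G ∘ T)`. -/
theorem stmt_11 (F G : ℝ → ℝ) (hFmeas : Measurable F) (hGmeas : Measurable G)
    (hF0 : ∀ x, 0 ≤ F x) (hG0 : ∀ x, 0 ≤ G x)
    (hFper : Function.Periodic F (2 * π)) (hGper : Function.Periodic G (2 * π))
    (hFeven : ∀ x, F (-x) = F x) (hGeven : ∀ x, G (-x) = G x)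
    (hFmono : MonotoneOn F (Set.Ioo 0 π)) (hGanti : AntitoneOn G (Set.Ioo 0 π))
    (T : ℝ → ℝ) (hTmaps : Set.MapsTo T (Set.Ioc 0 (2 * π)) (Set.Ioc 0 (2 * π)))
    (hTpres : MeasurePreserving T (volume.restrict (Set.Ioc 0 (2 * π)))
      (volume.restrict (Set.Ioc 0 (2 * π)))) :
    ∫⁻ t in Set.Ioc 0 (2 * π), ENNReal.ofReal (F t * G t) ≤
      ∫⁻ t in Set.Ioc 0 (2 * π), ENNReal.ofReal (F t * G (T t)) := by
  have hGT : Measurable fun t => G (T t) := hGmeas.comp hTpres.measurable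
  rw [Stmt11.layercake F G hFmeas hGmeas hF0,
    Stmt11.layercake F (fun t => G (T t)) hFmeas hGT hF0]
  refine lintegral_mono fun u => lintegral_mono fun s => ?_
  set A := {t : ℝ | s < F t} with hAdef
  set B := {t : ℝ | u < G t} with hBdef
  have hA : MeasurableSet A := measurableSet_lt measurable_const hFmeas
  have hB : MeasurableSet B := measurableSet_lt measurable_const hGmeas
  have hBI : MeasurableSet (B ∩ Ioc 0 (2 * π)) := hB.inter measurableSet_Ioc
  have hkey := Stmt11.key F G hFmeas hGmeas hFper hGper hFeven hGeven hFmono hGanti s u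
  have hCeq : {t : ℝ | u < G (T t)} ∩ Ioc 0 (2 * π)
      = T ⁻¹' (B ∩ Ioc 0 (2 * π)) ∩ Ioc 0 (2 * π) := by
    ext t
    constructor
    · rintro ⟨h1, h2⟩; exact ⟨⟨h1, hTmaps h2⟩, h2⟩
    · rintro ⟨⟨h1, -⟩, h2⟩; exact ⟨h1, h2⟩
  have hpre : volume (T ⁻¹' (B ∩ Ioc 0 (2 * π)) ∩ Ioc 0 (2 * π))
      = volume (B ∩ Ioc 0 (2 * π)) := by
    have h1 := hTpres.measure_preimage hBI.nullMeasurableSet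
    rw [Measure.restrict_apply (hTpres.measurable hBI),
      Measure.restrict_apply hBI] at h1
    rwa [inter_assoc, inter_self] at h1
  refine le_trans hkey ?_
  rw [tsub_le_iff_right]
  have hsets : A ∩ ({t : ℝ | u < G (T t)} ∩ Ioc 0 (2 * π))
      = (A ∩ Ioc 0 (2 * π)) ∩ (T ⁻¹' (B ∩ Ioc 0 (2 * π)) ∩ Ioc 0 (2 * π)) := by
    rw [hCeq]
    ext t
    simp only [mem_inter_iff]
    tauto
  rw [hsets, ← hpre]
  have hTm : MeasurableSet (T ⁻¹' (B ∩ Ioc 0 (2 * π)) ∩ Ioc 0 (2 * π)) :=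
    (hTpres.measurable hBI).inter measurableSet_Ioc
  calc volume (A ∩ Ioc 0 (2 * π)) + volume (T ⁻¹' (B ∩ Ioc 0 (2 * π)) ∩ Ioc 0 (2 * π))
      = volume ((A ∩ Ioc 0 (2 * π)) ∪ (T ⁻¹' (B ∩ Ioc 0 (2 * π)) ∩ Ioc 0 (2 * π)))
        + volume ((A ∩ Ioc 0 (2 * π)) ∩ (T ⁻¹' (B ∩ Ioc 0 (2 * π)) ∩ Ioc 0 (2 * π))) :=
        (measure_union_add_inter _ hTm).symm
    _ ≤ ENNReal.ofReal (2 * π)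
        + volume ((A ∩ Ioc 0 (2 * π)) ∩ (T ⁻¹' (B ∩ Ioc 0 (2 * π)) ∩ Ioc 0 (2 * π))) := by
        refine add_le_add ?_ le_rfl
        calc volume ((A ∩ Ioc 0 (2 * π)) ∪ (T ⁻¹' (B ∩ Ioc 0 (2 * π)) ∩ Ioc 0 (2 * π)))
            ≤ volume (Ioc 0 (2 * π)) :=
              measure_mono (Set.union_subset inter_subset_right inter_subset_right)
          _ = ENNReal.ofReal (2 * π) := by rw [Real.volume_Ioc, sub_zero]
    _ = volume ((A ∩ Ioc 0 (2 * π)) ∩ (T ⁻¹' (B ∩ Ioc 0 (2 * π)) ∩ Ioc 0 (2 * π)))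
        + ENNReal.ofReal (2 * π) := add_comm _ _
end

section
/- For every integer k ≥ 33, ∑_{j=1}^{k−1} (1 − 1/2^{2j}) · 2·(2j−1)!·ζ(2j)/(2π)^{2j} + (3/4 − log 2) < (1 − 1/2^{2k}) · 2·(2k−1)!·ζ(2k)/(2π)^{2k}, where ζ denotes the Riemann zeta function. -/
open Real Complex

private lemma zeta_bnds {n : ℕ} (hn : 2 ≤ n) :
    1 ≤ (riemannZeta n).re ∧ (riemannZeta n).re ≤ 2 := by
  have h1 : (1:ℕ) < n := hn
  have hsum : Summable (fun m : ℕ => 1 / (m:ℝ)^n) := Real.summable_one_div_nat_pow.mpr hn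
  have hsum2 : Summable (fun m : ℕ => 1 / (m:ℝ)^2) := Real.summable_one_div_nat_pow.mpr one_lt_two
  have hreal : riemannZeta n = ((∑' m : ℕ, 1 / (m:ℝ)^n : ℝ) : ℂ) := by
    rw [zeta_nat_eq_tsum_of_gt_one h1, Complex.ofReal_tsum]
    congr 1; funext m
    push_cast
    ring
  rw [hreal, Complex.ofReal_re]
  constructor
  · have := Summable.le_tsum hsum 1 (fun j _ => by positivity)
    simpa using this
  · have hle : ∑' m : ℕ, 1 / (m:ℝ)^n ≤ ∑' m : ℕ, 1 / (m:ℝ)^2 := by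
      refine Summable.tsum_le_tsum (fun m => ?_) hsum hsum2
      rcases m with _ | s
      · norm_num [zero_pow (by omega : n ≠ 0)]
      · apply one_div_le_one_div_of_le (by positivity)
        exact pow_le_pow_right₀
          (by exact_mod_cast Nat.one_le_iff_ne_zero.mpr (Nat.succ_ne_zero s)) hn
    have h2 : ∑' m : ℕ, 1 / (m:ℝ)^2 = π^2/6 := hasSum_zeta_two.tsum_eq
    nlinarith [Real.pi_lt_d2, Real.pi_gt_three]

/-- The summand. -/
private noncomputable def Tm (j : ℕ) : ℝ :=
  (1 - 1 / (2 : ℝ) ^ (2 * j)) * (2 * (Nat.factorial (2 * j - 1) : ℝ) *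
    (riemannZeta (2 * j : ℕ)).re) / (2 * π) ^ (2 * j)

private lemma fact40 : ∀ j ∈ Finset.Icc 1 32,
    Nat.factorial (2*j-1) * 40^(32-j) ≤ Nat.factorial 63 := by decide

private lemma q_bounds : 36 < (2*π)^2 ∧ (2*π)^2 < 40 := by
  constructor <;> nlinarith [Real.pi_lt_d2, Real.pi_gt_three]

private lemma pow_eq (j : ℕ) : (2*π) ^ (2*j) = ((2*π)^2) ^ j := by
  rw [pow_mul]

private lemma Tm_ub {j : ℕ} (hj : 1 ≤ j) :
    Tm j ≤ 4 * (Nat.factorial (2*j-1) : ℝ) / ((2*π)^2) ^ j := by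
  obtain ⟨hq1, hq2⟩ := q_bounds
  have hz := zeta_bnds (n := 2*j) (by omega)
  have hF : (0:ℝ) ≤ (Nat.factorial (2*j-1) : ℝ) := by positivity
  have he : (0:ℝ) ≤ 1 / (2:ℝ)^(2*j) := by positivity
  have he2 : 1 - 1 / (2:ℝ)^(2*j) ≤ 1 := by linarith
  rw [Tm, pow_eq]
  have hqp : (0:ℝ) < ((2*π)^2) ^ j := by positivity
  rw [div_le_div_iff₀ hqp hqp]
  have hnum : (1 - 1 / (2:ℝ)^(2*j)) * (2 * (Nat.factorial (2*j-1) : ℝ) *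
      (riemannZeta (2*j : ℕ)).re) ≤ 4 * (Nat.factorial (2*j-1) : ℝ) := by
    nlinarith [hz.1, hz.2, mul_nonneg hF (le_trans zero_le_one hz.1),
      mul_nonneg he (mul_nonneg hF (le_trans zero_le_one hz.1))]
  nlinarith [hqp, mul_le_mul_of_nonneg_right hnum (le_of_lt hqp)]

private lemma Tm_lb {k : ℕ} (hk : 1 ≤ k) :
    3/2 * (Nat.factorial (2*k-1) : ℝ) / ((2*π)^2) ^ k ≤ Tm k := by
  obtain ⟨hq1, hq2⟩ := q_bounds
  have hz := zeta_bnds (n := 2*k) (by omega)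
  have hF : (0:ℝ) ≤ (Nat.factorial (2*k-1) : ℝ) := by positivity
  have he : 1 / (2:ℝ)^(2*k) ≤ 1/4 := by
    apply div_le_div_of_nonneg_left (by norm_num) (by norm_num)
    calc (4:ℝ) = 2^(2*1) := by norm_num
    _ ≤ 2^(2*k) := by apply pow_le_pow_right₀ one_le_two; omega
  rw [Tm, pow_eq]
  have hqp : (0:ℝ) < ((2*π)^2) ^ k := by positivity
  rw [div_le_div_iff₀ hqp hqp]
  have hnum : 3/2 * (Nat.factorial (2*k-1) : ℝ) ≤ (1 - 1 / (2:ℝ)^(2*k)) *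
      (2 * (Nat.factorial (2*k-1) : ℝ) * (riemannZeta (2*k : ℕ)).re) := by
    have hF1 : (1:ℝ) ≤ (Nat.factorial (2*k-1) : ℝ) := by
      exact_mod_cast Nat.one_le_iff_ne_zero.mpr (Nat.factorial_ne_zero (2*k-1))
    have h34 : (3:ℝ)/4 ≤ 1 - 1 / (2:ℝ)^(2*k) := by linarith
    have hz0 : (0:ℝ) ≤ (riemannZeta (2*k : ℕ)).re := le_trans zero_le_one hz.1
    have hzF : 2 * (Nat.factorial (2*k-1) : ℝ) * 1 ≤
        2 * (Nat.factorial (2*k-1) : ℝ) * (riemannZeta (2*k : ℕ)).re :=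
      mul_le_mul_of_nonneg_left hz.1 (by positivity)
    have hmm : 3/4 * (2 * (Nat.factorial (2*k-1) : ℝ) * (riemannZeta (2*k : ℕ)).re) ≤
        (1 - 1 / (2:ℝ)^(2*k)) * (2 * (Nat.factorial (2*k-1) : ℝ) * (riemannZeta (2*k : ℕ)).re) :=
      mul_le_mul_of_nonneg_right h34 (by positivity)
    linarith
  nlinarith [hqp, mul_le_mul_of_nonneg_right hnum (le_of_lt hqp)]

/-- Key estimate: for `k ≥ 33`,
`∑_{j=1}^{k-1} (1 - 1/2^{2j}) · 2·(2j-1)!·ζ(2j)/(2π)^{2j} + (3/4 - log 2)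
  < (1 - 1/2^{2k}) · 2·(2k-1)!·ζ(2k)/(2π)^{2k}`. -/
theorem stmt_14 (k : ℕ) (hk : 33 ≤ k) :
    ∑ j ∈ Finset.Icc 1 (k - 1),
        (1 - 1 / (2 : ℝ) ^ (2 * j)) * (2 * (Nat.factorial (2 * j - 1) : ℝ) *
          (riemannZeta (2 * j : ℕ)).re) / (2 * π) ^ (2 * j)
      + (3 / 4 - Real.log 2) <
    (1 - 1 / (2 : ℝ) ^ (2 * k)) * (2 * (Nat.factorial (2 * k - 1) : ℝ) *
      (riemannZeta (2 * k : ℕ)).re) / (2 * π) ^ (2 * k) := by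
  show ∑ j ∈ Finset.Icc 1 (k-1), Tm j + (3/4 - Real.log 2) < Tm k
  obtain ⟨hq1, hq2⟩ := q_bounds
  have hq0 : (0:ℝ) < (2*π)^2 := by linarith
  induction k, hk using Nat.le_induction with
  | base =>
    have hX : (3:ℝ)/4 ≤ (Nat.factorial 63 : ℝ) / ((2*π)^2)^32 := by
      rw [le_div_iff₀ (by positivity)]
      calc (3:ℝ)/4 * ((2*π)^2)^32 ≤ 3/4 * 40^32 := by
            nlinarith [pow_le_pow_left₀ hq0.le hq2.le 32]
      _ ≤ (Nat.factorial 63 : ℝ) := by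
            have h : (3 * 40^32 : ℕ) ≤ 4 * Nat.factorial 63 := by decide
            have h2 := (Nat.cast_le (α := ℝ)).mpr h
            push_cast at h2
            linarith
    have hsum : ∑ j ∈ Finset.Icc 1 (33-1), Tm j
        ≤ 128 * ((Nat.factorial 63 : ℝ) / ((2*π)^2)^32) := by
      have hb : ∀ j ∈ Finset.Icc 1 32,
          Tm j ≤ 4 * (Nat.factorial 63 : ℝ) / ((2*π)^2)^32 := by
        intro j hj
        simp only [Finset.mem_Icc] at hj
        refine (Tm_ub hj.1).trans ?_
        rw [div_le_div_iff₀ (by positivity) (by positivity)]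
        have hsplit : ((2*π)^2)^32 = ((2*π)^2)^(32-j) * ((2*π)^2)^j := by
          rw [← pow_add]; congr 1; omega
        rw [hsplit]
        have h1 : (Nat.factorial (2*j-1) : ℝ) * ((2*π)^2)^(32-j) ≤ (Nat.factorial 63 : ℝ) := by
          calc (Nat.factorial (2*j-1) : ℝ) * ((2*π)^2)^(32-j)
              ≤ (Nat.factorial (2*j-1) : ℝ) * 40^(32-j) := by
                apply mul_le_mul_of_nonneg_left _ (by positivity)
                exact pow_le_pow_left₀ hq0.le hq2.le _
          _ ≤ (Nat.factorial 63 : ℝ) := by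
                exact_mod_cast fact40 j (by simp only [Finset.mem_Icc]; omega)
        calc 4 * (Nat.factorial (2*j-1) : ℝ) * (((2*π)^2)^(32-j) * ((2*π)^2)^j)
            = 4 * ((2*π)^2)^j * ((Nat.factorial (2*j-1) : ℝ) * ((2*π)^2)^(32-j)) := by ring
        _ ≤ 4 * ((2*π)^2)^j * (Nat.factorial 63 : ℝ) :=
              mul_le_mul_of_nonneg_left h1 (by positivity)
        _ = 4 * (Nat.factorial 63 : ℝ) * ((2*π)^2)^j := by ring
      calc ∑ j ∈ Finset.Icc 1 (33-1), Tm j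
          ≤ (Finset.Icc 1 32).card • (4 * (Nat.factorial 63 : ℝ) / ((2*π)^2)^32) :=
            Finset.sum_le_card_nsmul _ _ _ hb
      _ = 128 * ((Nat.factorial 63 : ℝ) / ((2*π)^2)^32) := by
            simp only [Nat.card_Icc, smul_eq_mul]
            norm_num
            ring
    have hlog : (0:ℝ) ≤ Real.log 2 := Real.log_nonneg one_le_two
    have hlast : 129 * ((Nat.factorial 63 : ℝ) / ((2*π)^2)^32) < Tm 33 := by
      refine lt_of_lt_of_le ?_ (Tm_lb (by norm_num))
      have h65n : Nat.factorial (2*33-1) = 65 * 64 * Nat.factorial 63 := by decide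
      have h65 : (Nat.factorial (2*33-1) : ℝ) = 65 * 64 * (Nat.factorial 63 : ℝ) := by
        rw [h65n]; push_cast; ring
      rw [h65, show 129 * ((Nat.factorial 63 : ℝ) / ((2*π)^2)^32)
          = 129 * (Nat.factorial 63 : ℝ) / ((2*π)^2)^32 from (mul_div_assoc _ _ _).symm,
        div_lt_div_iff₀ (by positivity) (by positivity), pow_succ]
      have hF0 : (0:ℝ) < (Nat.factorial 63 : ℝ) * ((2*π)^2)^32 := by positivity
      nlinarith [mul_lt_mul_of_pos_right (show 129 * (2*π)^2 < 6240 by nlinarith) hF0]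
    linarith
  | succ n hn ih =>
    have hstep : ∑ j ∈ Finset.Icc 1 (n+1-1), Tm j
        = ∑ j ∈ Finset.Icc 1 (n-1), Tm j + Tm n := by
      obtain ⟨m, rfl⟩ : ∃ m, n = m + 1 := ⟨n - 1, by omega⟩
      simp only [Nat.add_sub_cancel]
      exact Finset.sum_Icc_succ_top (by omega) _
    rw [hstep]
    have h2T : Tm n + Tm n ≤ Tm (n+1) := by
      have hub := Tm_ub (j := n) (by omega)
      have hlb := Tm_lb (k := n+1) (by omega)
      set m : ℕ := 2*n - 1 with hm
      have hm65 : 65 ≤ m := by omega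
      have hfact : (Nat.factorial (2*(n+1)-1) : ℝ)
          = ((m:ℝ)+2) * (((m:ℝ)+1) * (Nat.factorial m : ℝ)) := by
        have e1 : 2*(n+1)-1 = (m+1)+1 := by omega
        rw [e1, Nat.factorial_succ, Nat.factorial_succ]
        push_cast; ring
      have key : 8 * (Nat.factorial m : ℝ) / ((2*π)^2)^n
          ≤ 3/2 * (((m:ℝ)+2) * (((m:ℝ)+1) * (Nat.factorial m : ℝ))) / ((2*π)^2)^(n+1) := by
        rw [div_le_div_iff₀ (by positivity) (by positivity), pow_succ]
        have hF1 : (1:ℝ) ≤ (Nat.factorial m : ℝ) := by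
          exact_mod_cast Nat.one_le_iff_ne_zero.mpr (Nat.factorial_ne_zero m)
        have hmr : (65:ℝ) ≤ (m:ℝ) := by exact_mod_cast hm65
        have hqn : (0:ℝ) < ((2*π)^2)^n := by positivity
        nlinarith [mul_le_mul_of_nonneg_right
          (show 8 * (2*π)^2 ≤ 3/2 * ((m:ℝ)+2) * ((m:ℝ)+1) by nlinarith)
          (le_of_lt (mul_pos (show (0:ℝ) < (Nat.factorial m : ℝ) by linarith) hqn))]
      calc Tm n + Tm n ≤ 2 * (4 * (Nat.factorial (2*n-1) : ℝ) / ((2*π)^2)^n) := by linarith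
      _ = 8 * (Nat.factorial m : ℝ) / ((2*π)^2)^n := by rw [← hm]; ring
      _ ≤ 3/2 * (((m:ℝ)+2) * (((m:ℝ)+1) * (Nat.factorial m : ℝ))) / ((2*π)^2)^(n+1) := key
      _ = 3/2 * (Nat.factorial (2*(n+1)-1) : ℝ) / ((2*π)^2)^(n+1) := by rw [hfact]
      _ ≤ Tm (n+1) := hlb
    linarith
end

section
/- Let h(φ) := log 2 − 1 + cos φ − (φ/2)·sin(2φ) − cos(2φ)·log(2 cos(φ/2)). Then h(φ) > 0 for all real φ with 0 < φ < π. -/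
open Real

private lemma denomPos (u s x : ℝ) (hs : 0 < s) (hus : u^2 + s^2 = 1) :
    0 < x^2 + 2*u*x + 1 := by
  nlinarith [sq_nonneg (x + u), mul_pos hs hs]

private lemma hasDerivAt_F (u s : ℝ) (hs : 0 < s) (hus : u^2 + s^2 = 1) (x : ℝ) :
    HasDerivAt (fun y : ℝ => y^2/2 - u*y + ((2*u^2-1)/2) * Real.log (y^2+2*u*y+1)
      + (2*u*s) * Real.arctan ((y+u)/s))
      (x^2*(u+x)/(x^2+2*u*x+1)) x := by
  have hD : (0:ℝ) < x^2 + 2*u*x + 1 := denomPos u s x hs hus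
  have h1 : HasDerivAt (fun y : ℝ => y^2/2 - u*y) (x - u) x := by
    have := ((hasDerivAt_pow 2 x).div_const 2).sub ((hasDerivAt_id x).const_mul u)
    exact this.congr_deriv (by ring)
  have h2 : HasDerivAt (fun y : ℝ => y^2+2*u*y+1) (2*x + 2*u) x := by
    have := ((hasDerivAt_pow 2 x).add ((hasDerivAt_id x).const_mul (2*u))).add_const 1
    exact this.congr_deriv (by ring)
  have h3 := (h2.log hD.ne').const_mul ((2*u^2-1)/2)
  have h4 : HasDerivAt (fun y : ℝ => (y+u)/s) (1/s) x := by
    have := ((hasDerivAt_id x).add_const u).div_const s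
    exact this
  have h5 := h4.arctan.const_mul (2*u*s)
  have h6 := (h1.add h3).add h5
  refine h6.congr_deriv ?_
  symm
  have hx : 1 + ((x+u)/s)^2 = (x^2+2*u*x+1)/s^2 := by
    field_simp
    linear_combination hus
  have h7 : 1/(1+((x+u)/s)^2) * (1/s) = s/(x^2+2*u*x+1) := by
    rw [hx]
    field_simp
  rw [h7]
  rw [div_eq_iff hD.ne', add_mul, add_mul, mul_assoc ((2*u^2-1)/2), div_mul_cancel₀ _ hD.ne',
    mul_assoc (2*u*s), div_mul_cancel₀ _ hD.ne']
  linear_combination (-2*u) * hus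

private lemma hasDerivAt_F0 (x : ℝ) (hx : 0 < 1 + x) :
    HasDerivAt (fun y : ℝ => y^2/2 - y + Real.log (1+y)) (x^2/(1+x)) x := by
  have h1 : HasDerivAt (fun y : ℝ => y^2/2 - y) (x - 1) x := by
    have := ((hasDerivAt_pow 2 x).div_const 2).sub (hasDerivAt_id x)
    exact this.congr_deriv (by ring)
  have h2 : HasDerivAt (fun y : ℝ => (1:ℝ)+y) 1 x := by
    simpa using (hasDerivAt_id x).const_add (1:ℝ)
  have h3 := h2.log hx.ne'
  have h4 := h1.add h3
  refine h4.congr_deriv ?_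
  field_simp
  ring

set_option maxHeartbeats 1000000 in
/-- `h(φ) > 0` for all `0 < φ < π`, where
`h(φ) = log 2 - 1 + cos φ - (φ/2) sin(2φ) - cos(2φ) log(2 cos(φ/2))`. -/
theorem stmt_18 (φ : ℝ) (h1 : 0 < φ) (h2 : φ < π) :
    0 < Real.log 2 - 1 + Real.cos φ - (φ / 2) * Real.sin (2 * φ)
      - Real.cos (2 * φ) * Real.log (2 * Real.cos (φ / 2)) := by
  set u := Real.cos φ with hu
  set s := Real.sin φ with hsdef
  set c := Real.cos (φ/2) with hc
  set σ := Real.sin (φ/2) with hσ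
  have hs : 0 < s := Real.sin_pos_of_pos_of_lt_pi h1 h2
  have hus : u^2 + s^2 = 1 := by rw [hu, hsdef]; exact Real.cos_sq_add_sin_sq φ
  have hcpos : 0 < c := Real.cos_pos_of_mem_Ioo ⟨by linarith [Real.pi_pos], by linarith⟩
  have hσpos : 0 < σ := Real.sin_pos_of_pos_of_lt_pi (by linarith) (by linarith [Real.pi_pos])
  have hcc : c^2 = 1/2 + u/2 := by
    have h := Real.cos_sq (φ/2)
    rw [show 2*(φ/2) = φ by ring] at h
    rw [hc, hu, h]
  have hsc : s = 2 * σ * c := by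
    rw [hsdef, hσ, hc, show φ = 2 * (φ/2) by ring, Real.sin_two_mul]
    ring_nf
  have hu1 : u < 1 := by nlinarith
  have hcont1 : Continuous fun x : ℝ => x^2*(u+x)/(x^2+2*u*x+1) := by
    apply Continuous.div (by continuity) (by continuity)
    intro x; exact (denomPos u s x hs hus).ne'
  have hint1 : IntervalIntegrable (fun x : ℝ => x^2*(u+x)/(x^2+2*u*x+1))
      MeasureTheory.volume 0 1 := hcont1.intervalIntegrable 0 1
  have hcont0 : ContinuousOn (fun x : ℝ => x^2/(1+x)) (Set.uIcc 0 1) := by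
    apply ContinuousOn.div (by fun_prop) (by fun_prop)
    intro x hx
    rw [Set.uIcc_of_le (by norm_num : (0:ℝ) ≤ 1)] at hx
    have := hx.1; positivity
  have hint0 : IntervalIntegrable (fun x : ℝ => x^2/(1+x))
      MeasureTheory.volume 0 1 := hcont0.intervalIntegrable
  have I1 : ∫ x in (0:ℝ)..1, x^2*(u+x)/(x^2+2*u*x+1)
      = 1/2 - u + ((2*u^2-1)/2) * Real.log (2+2*u)
        + (2*u*s) * Real.arctan ((1+u)/s) - (2*u*s) * Real.arctan (u/s) := by
    rw [intervalIntegral.integral_eq_sub_of_hasDerivAt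
      (f := fun y : ℝ => y^2/2 - u*y + ((2*u^2-1)/2) * Real.log (y^2+2*u*y+1)
        + (2*u*s) * Real.arctan ((y+u)/s))
      (fun x _ => hasDerivAt_F u s hs hus x) hint1]
    have e1 : (1:ℝ)^2+2*u*1+1 = 2+2*u := by ring
    have e2 : (0:ℝ)^2+2*u*0+1 = 1 := by ring
    have e3 : (0:ℝ)+u = u := by ring
    have e4 : (1:ℝ)+u = 1+u := rfl
    simp only [e1, e2, e3, Real.log_one]
    ring
  have I0 : ∫ x in (0:ℝ)..1, x^2/(1+x) = Real.log 2 - 1/2 := by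
    rw [intervalIntegral.integral_eq_sub_of_hasDerivAt
      (f := fun y : ℝ => y^2/2 - y + Real.log (1+y))
      (fun x hx => by
        rw [Set.uIcc_of_le (by norm_num : (0:ℝ) ≤ 1)] at hx
        exact hasDerivAt_F0 x (by have := hx.1; positivity)) hint0]
    have e2 : (1:ℝ)+0 = 1 := by ring
    simp only [e2, Real.log_one]
    ring
  have hpos : 0 < ∫ x in (0:ℝ)..1, (x^2/(1+x) - x^2*(u+x)/(x^2+2*u*x+1)) := by
    apply intervalIntegral.intervalIntegral_pos_of_pos_on (hint0.sub hint1)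
    · intro x hx
      obtain ⟨hx0, hx1⟩ := hx
      have hD : (0:ℝ) < x^2 + 2*u*x + 1 := denomPos u s x hs hus
      have h1x : (0:ℝ) < 1 + x := by linarith
      have key : x^2/(1+x) - x^2*(u+x)/(x^2+2*u*x+1)
          = x^2*(1-x)*(1-u)/((1+x)*(x^2+2*u*x+1)) := by
        rw [div_sub_div _ _ h1x.ne' hD.ne', div_eq_div_iff (by positivity) (by positivity)]; ring
      rw [key]
      have hnum : 0 < x^2*(1-x)*(1-u) :=
        mul_pos (mul_pos (by positivity) (by linarith)) (by linarith)
      positivity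
    · norm_num
  rw [intervalIntegral.integral_sub hint0 hint1, I0, I1] at hpos
  have harct0 : Real.arctan (u/s) = π/2 - φ := by
    rw [show u/s = (s/u)⁻¹ by rw [inv_div], hu, hsdef, ← Real.tan_eq_sin_div_cos,
      ← Real.tan_pi_div_two_sub]
    exact Real.arctan_tan (by linarith) (by linarith)
  have harct1 : Real.arctan ((1+u)/s) = π/2 - φ/2 := by
    have h1u : (1+u)/s = (σ/c)⁻¹ := by
      rw [inv_div, hsc]
      field_simp
      linear_combination (-2) * hcc
    rw [h1u, hσ, hc, ← Real.tan_eq_sin_div_cos, ← Real.tan_pi_div_two_sub]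
    exact Real.arctan_tan (by linarith) (by linarith [Real.pi_pos])
  have hlog : Real.log (2+2*u) = 2 * Real.log (2*c) := by
    rw [show (2:ℝ)+2*u = (2*c)^2 by nlinarith, Real.log_pow]
    norm_num
  rw [harct0, harct1, hlog] at hpos
  have hsin2 : Real.sin (2*φ) = 2 * s * u := by
    rw [Real.sin_two_mul, hsdef, hu]
  have hcos2 : Real.cos (2*φ) = 2*u^2 - 1 := by
    rw [Real.cos_two_mul, hu]
  rw [hsin2, hcos2]
  nlinarith [hpos]
end
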